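/- arXiv:2010.14780 — 3 statements merged into one kernel-verified Lean document; each statement's English description precedes it below -/
import Mathlib

section
/- Let n ≥ 1 and let w_0 ∈ S_n be the longest permutation. In ℚ[x_1,…,x_n,t_1,…,t_n], applying the Demazure operator ∂^x_{w_0} (acting on the x-variables only) to the product ∏_{i+j ≤ n} (x_i − t_j) yields the constant polynomial 1. Equivalently, the double Schubert polynomial of the identity permutation is 1: 𝔖_{id}(x,t) = 1. -/
open MvPolynomial
open scoped Classical

/-- The Coxeter length of a permutation of `Fin n`, i.e. its number of inversions. -/
def permLen {n : ℕ} (w : Equiv.Perm (Fin n)) : ℕ :=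
  (Finset.univ.filter (fun p : Fin n × Fin n => p.1 < p.2 ∧ w p.2 < w p.1)).card

/-- The adjacent transposition `s_i` exchanging the `i`-th and `(i+1)`-th letters
(zero-indexed); junk value `1` if out of range. -/
def adjSwap (n : ℕ) (i : ℕ) : Equiv.Perm (Fin n) :=
  if h : i + 1 < n then Equiv.swap ⟨i, Nat.lt_of_succ_lt h⟩ ⟨i + 1, h⟩ else 1

/-- The longest element `w₀` of the symmetric group on `Fin n`, `i ↦ n - 1 - i`
(one-indexed: `i ↦ n + 1 - i`). -/
def w0 (n : ℕ) : Equiv.Perm (Fin n) := Fin.revPerm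

/-- The Demazure (divided difference) operator with respect to a pair of variables `i j`:
`f ↦ (f - swap(i,j)·f) / (Xᵢ - Xⱼ)`.  The difference is always divisible by `Xᵢ - Xⱼ`
(for `i ≠ j`), and the quotient is unique since the polynomial ring is a domain, so the
definition by choice below produces exactly this quotient. -/
noncomputable def demazure {σ : Type} [DecidableEq σ] (i j : σ)
    (f : MvPolynomial σ ℚ) : MvPolynomial σ ℚ :=
  if h : ∃ g, f - rename (Equiv.swap i j) f = (X i - X j) * g then h.choose else 0

/-- The Demazure operator `∂ᵢ` on `ℚ[x₀, …, x_{n-1}]` (zero-indexed). -/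
noncomputable def demAt (n : ℕ) (i : ℕ) :
    MvPolynomial (Fin n) ℚ → MvPolynomial (Fin n) ℚ :=
  if h : i + 1 < n then demazure ⟨i, Nat.lt_of_succ_lt h⟩ ⟨i + 1, h⟩ else fun _ => 0

/-- The composite Demazure operator `∂_{i₁} ∘ ⋯ ∘ ∂_{i_r}` along a word `l = [i₁, …, i_r]`. -/
noncomputable def demWord (n : ℕ) (l : List ℕ) :
    MvPolynomial (Fin n) ℚ → MvPolynomial (Fin n) ℚ :=
  l.foldr (fun i op => demAt n i ∘ op) id

/-- `l = [i₁, …, i_r]` is a reduced word for `w` if all letters are in range,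
`s_{i₁} ⋯ s_{i_r} = w`, and `r = ℓ(w)` is the number of inversions of `w`. -/
def IsReducedWord (n : ℕ) (w : Equiv.Perm (Fin n)) (l : List ℕ) : Prop :=
  (∀ i ∈ l, i + 1 < n) ∧ (l.map (adjSwap n)).prod = w ∧ l.length = permLen w

/-- The Demazure operator `∂_w`, defined along a chosen reduced word of `w`
(the result is independent of this choice). -/
noncomputable def demazureOf (n : ℕ) (w : Equiv.Perm (Fin n)) :
    MvPolynomial (Fin n) ℚ → MvPolynomial (Fin n) ℚ :=
  if h : ∃ l, IsReducedWord n w l then demWord n h.choose else fun _ => 0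

/-- The Demazure operator `∂ᵢˣ` acting on the `x`-variables (the left summand) of
`ℚ[x₁, …, xₙ, t₁, …, tₙ]`. -/
noncomputable def demAtX (n : ℕ) (i : ℕ) :
    MvPolynomial (Fin n ⊕ Fin n) ℚ → MvPolynomial (Fin n ⊕ Fin n) ℚ :=
  if h : i + 1 < n then
    demazure (Sum.inl ⟨i, Nat.lt_of_succ_lt h⟩) (Sum.inl ⟨i + 1, h⟩) else fun _ => 0

/-- Composite of `x`-variable Demazure operators along a word. -/
noncomputable def demWordX (n : ℕ) (l : List ℕ) :
    MvPolynomial (Fin n ⊕ Fin n) ℚ → MvPolynomial (Fin n ⊕ Fin n) ℚ :=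
  l.foldr (fun i op => demAtX n i ∘ op) id

/-- The Demazure operator `∂_wˣ` in the `x`-variables, along a chosen reduced word of `w`. -/
noncomputable def demazureOfX (n : ℕ) (w : Equiv.Perm (Fin n)) :
    MvPolynomial (Fin n ⊕ Fin n) ℚ → MvPolynomial (Fin n ⊕ Fin n) ℚ :=
  if h : ∃ l, IsReducedWord n w l then demWordX n h.choose else fun _ => 0

/-- The top product `∏_{i + j ≤ n} (xᵢ - tⱼ)` (one-indexed), i.e. the double Schubert
polynomial of the longest element. -/
noncomputable def schubProd (n : ℕ) : MvPolynomial (Fin n ⊕ Fin n) ℚ :=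
  ∏ p ∈ Finset.univ.filter (fun p : Fin n × Fin n => (p.1 : ℕ) + (p.2 : ℕ) + 2 ≤ n),
    (X (Sum.inl p.1) - X (Sum.inr p.2))

/-- The double Schubert polynomial `𝔖_w(x, t) = ∂ˣ_{w⁻¹w₀} (∏_{i+j≤n} (xᵢ - tⱼ))`. -/
noncomputable def schubert (n : ℕ) (w : Equiv.Perm (Fin n)) :
    MvPolynomial (Fin n ⊕ Fin n) ℚ :=
  demazureOfX n (w⁻¹ * w0 n) (schubProd n)

namespace SchubAux

lemma dvd_sub_subst {σ : Type} [DecidableEq σ] (i j : σ) (g : MvPolynomial σ ℚ) :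
    (X i - X j : MvPolynomial σ ℚ) ∣
      (g - aeval (fun k => if k = j then (X i : MvPolynomial σ ℚ) else X k) g) := by
  induction g using MvPolynomial.induction_on with
  | C a => simp
  | add p q hp hq =>
      have := dvd_add hp hq
      simpa [add_sub_add_comm] using this
  | mul_X p k hp =>
      rw [map_mul, aeval_X]
      by_cases hk : k = j
      · subst hk
        rw [if_pos rfl]
        have hr : p * X k -
            aeval (fun m => if m = k then (X i : MvPolynomial σ ℚ) else X m) p * X i
            = (p - aeval (fun m => if m = k then (X i : MvPolynomial σ ℚ) else X m) p) * X k
              - aeval (fun m => if m = k then (X i : MvPolynomial σ ℚ) else X m) p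
                * (X i - X k) := by ring
        rw [hr]
        exact dvd_sub (hp.mul_right _) (dvd_mul_left _ _)
      · rw [if_neg hk, ← sub_mul]
        exact hp.mul_right _

lemma exists_demazure {σ : Type} [DecidableEq σ] (i j : σ) (f : MvPolynomial σ ℚ) :
    ∃ g, f - rename (Equiv.swap i j) f = (X i - X j) * g := by
  by_cases hij : i = j
  · subst hij
    exact ⟨0, by simp [Equiv.swap_self]⟩
  · have key : ∀ g : MvPolynomial σ ℚ, (X i - X j : MvPolynomial σ ℚ) ∣
        (g - aeval (fun k => if k = j then (X i : MvPolynomial σ ℚ) else X k) g) :=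
      fun g => dvd_sub_subst i j g
    have h1 := key f
    have h2 := key (rename (Equiv.swap i j) f)
    have heq : aeval (fun k => if k = j then (X i : MvPolynomial σ ℚ) else X k)
          (rename (Equiv.swap i j) f)
        = aeval (fun k => if k = j then (X i : MvPolynomial σ ℚ) else X k) f := by
      rw [aeval_rename]
      have hfun : ((fun k => if k = j then (X i : MvPolynomial σ ℚ) else X k) ∘ ⇑(Equiv.swap i j))
          = (fun k => if k = j then (X i : MvPolynomial σ ℚ) else X k) := by
        funext k
        simp only [Function.comp]
        rcases eq_or_ne k i with rfl | hki
        · simp [Equiv.swap_apply_left, hij]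
        · rcases eq_or_ne k j with rfl | hkj
          · simp [Equiv.swap_apply_right, hij]
          · simp [Equiv.swap_apply_of_ne_of_ne hki hkj, hkj]
      rw [hfun]
    have := dvd_sub h1 h2
    rw [heq] at this
    obtain ⟨g, hg⟩ := by simpa [sub_sub_sub_cancel_right] using this
    exact ⟨g, hg⟩

lemma demazure_spec {σ : Type} [DecidableEq σ] (i j : σ) (f : MvPolynomial σ ℚ) :
    f - rename (Equiv.swap i j) f = (X i - X j) * demazure i j f := by
  rw [demazure, dif_pos (exists_demazure i j f)]
  exact (exists_demazure i j f).choose_spec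

lemma X_sub_X_ne_zero {σ : Type} {i j : σ} (h : i ≠ j) :
    (X i - X j : MvPolynomial σ ℚ) ≠ 0 :=
  sub_ne_zero.mpr (fun e => h (MvPolynomial.X_injective e))


variable {n : ℕ}

def invPairs (v : Equiv.Perm (Fin n)) : Finset (Fin n × Fin n) :=
  Finset.univ.filter (fun p => p.1 < p.2 ∧ v⁻¹ p.2 < v⁻¹ p.1)

lemma permLen_eq_card_invPairs (v : Equiv.Perm (Fin n)) : permLen v = (invPairs v).card := by
  apply Finset.card_bij' (fun p _ => (v p.2, v p.1)) (fun q _ => (v⁻¹ q.2, v⁻¹ q.1))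
  · intro p hp
    simp only [Finset.mem_filter, Finset.mem_univ, true_and] at hp ⊢
    simp [invPairs, Finset.mem_filter, hp.1, hp.2]
  · intro q hq
    simp only [invPairs, Finset.mem_filter, Finset.mem_univ, true_and] at hq ⊢
    exact ⟨hq.2, by simpa using hq.1⟩
  · intro p hp; simp
  · intro q hq; simp

lemma adjSwap_eq (h : i + 1 < n) :
    adjSwap n i = Equiv.swap ⟨i, Nat.lt_of_succ_lt h⟩ ⟨i + 1, h⟩ := dif_pos h

lemma swap_lt_of_lt {i : ℕ} (h : i + 1 < n) {p1 p2 : Fin n} (hlt : p1 < p2)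
    (hne : ¬(p1 = ⟨i, Nat.lt_of_succ_lt h⟩ ∧ p2 = ⟨i + 1, h⟩)) :
    Equiv.swap ⟨i, Nat.lt_of_succ_lt h⟩ ⟨i + 1, h⟩ p1
      < Equiv.swap ⟨i, Nat.lt_of_succ_lt h⟩ ⟨i + 1, h⟩ p2 := by
  simp only [Equiv.swap_apply_def]
  split_ifs <;> simp only [Fin.lt_def, Fin.ext_iff, Fin.mk_lt_mk] at * <;> omega


lemma invPairs_swap_mul {i : ℕ} (h : i + 1 < n) (v : Equiv.Perm (Fin n))
    (hv : v⁻¹ ⟨i, Nat.lt_of_succ_lt h⟩ < v⁻¹ ⟨i + 1, h⟩) :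
    invPairs (adjSwap n i * v)
      = insert ((⟨i, Nat.lt_of_succ_lt h⟩ : Fin n), (⟨i + 1, h⟩ : Fin n))
          ((invPairs v).image (fun p =>
            (Equiv.swap ⟨i, Nat.lt_of_succ_lt h⟩ ⟨i + 1, h⟩ p.1,
             Equiv.swap ⟨i, Nat.lt_of_succ_lt h⟩ ⟨i + 1, h⟩ p.2))) := by
  set a : Fin n := ⟨i, Nat.lt_of_succ_lt h⟩ with ha
  set b : Fin n := ⟨i + 1, h⟩ with hb
  set s := Equiv.swap a b with hs
  have hinv : (adjSwap n i * v)⁻¹ = v⁻¹ * s := by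
    rw [adjSwap_eq h, ← ha, ← hb, ← hs, mul_inv_rev, Equiv.swap_inv]
  have hab : a < b := by simp [ha, hb, Fin.lt_def]
  ext p
  simp only [invPairs, Finset.mem_filter, Finset.mem_univ, true_and, Finset.mem_insert,
    Finset.mem_image, hinv, Equiv.Perm.mul_apply, Prod.ext_iff]
  constructor
  · rintro ⟨hlt, hcond⟩
    by_cases hp : p.1 = a ∧ p.2 = b
    · exact Or.inl hp
    · refine Or.inr ⟨(s p.1, s p.2), ⟨?_, ?_⟩, ?_, ?_⟩
      · exact swap_lt_of_lt h hlt hp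
      · simpa using hcond
      · simp [hs, Equiv.swap_apply_self]
      · simp [hs, Equiv.swap_apply_self]
  · rintro (⟨h1, h2⟩ | ⟨q, ⟨hqlt, hqcond⟩, hq1, hq2⟩)
    · refine ⟨by rw [h1, h2]; exact hab, ?_⟩
      rw [h1, h2, hs, Equiv.swap_apply_left, Equiv.swap_apply_right]
      exact hv
    · have hqne : ¬(q.1 = a ∧ q.2 = b) := by
        rintro ⟨e1, e2⟩
        rw [e1, e2] at hqcond
        exact absurd hv (not_lt.mpr hqcond.le)
      refine ⟨?_, ?_⟩
      · rw [← hq1, ← hq2]; exact swap_lt_of_lt h hqlt hqne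
      · rw [← hq1, ← hq2]
        simpa [hs, Equiv.swap_apply_self] using hqcond

lemma pair_not_mem_image {i : ℕ} (h : i + 1 < n) (v : Equiv.Perm (Fin n)) :
    ((⟨i, Nat.lt_of_succ_lt h⟩ : Fin n), (⟨i + 1, h⟩ : Fin n)) ∉
      (invPairs v).image (fun p =>
        (Equiv.swap ⟨i, Nat.lt_of_succ_lt h⟩ ⟨i + 1, h⟩ p.1,
         Equiv.swap ⟨i, Nat.lt_of_succ_lt h⟩ ⟨i + 1, h⟩ p.2)) := by
  rw [Finset.mem_image]
  rintro ⟨q, hq, he⟩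
  rw [Prod.ext_iff] at he
  obtain ⟨h1, h2⟩ := he
  have e1 : q.1 = ⟨i + 1, h⟩ := by
    have := congrArg (Equiv.swap (⟨i, Nat.lt_of_succ_lt h⟩ : Fin n) ⟨i + 1, h⟩) h1
    simpa [Equiv.swap_apply_self, Equiv.swap_apply_left] using this
  have e2 : q.2 = ⟨i, Nat.lt_of_succ_lt h⟩ := by
    have := congrArg (Equiv.swap (⟨i, Nat.lt_of_succ_lt h⟩ : Fin n) ⟨i + 1, h⟩) h2
    simpa [Equiv.swap_apply_self, Equiv.swap_apply_right] using this
  simp only [invPairs, Finset.mem_filter] at hq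
  have := hq.2.1
  rw [e1, e2] at this
  exact absurd this (by simp [Fin.lt_def])

lemma card_invPairs_swap_mul {i : ℕ} (h : i + 1 < n) (v : Equiv.Perm (Fin n))
    (hv : v⁻¹ ⟨i, Nat.lt_of_succ_lt h⟩ < v⁻¹ ⟨i + 1, h⟩) :
    permLen (adjSwap n i * v) = permLen v + 1 := by
  have hinj : Function.Injective (fun p : Fin n × Fin n =>
      (Equiv.swap (⟨i, Nat.lt_of_succ_lt h⟩ : Fin n) ⟨i + 1, h⟩ p.1,
       Equiv.swap (⟨i, Nat.lt_of_succ_lt h⟩ : Fin n) ⟨i + 1, h⟩ p.2)) := by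
    intro x y hxy
    rw [Prod.ext_iff] at hxy ⊢
    exact ⟨(Equiv.swap _ _).injective hxy.1, (Equiv.swap _ _).injective hxy.2⟩
  rw [permLen_eq_card_invPairs, permLen_eq_card_invPairs, invPairs_swap_mul h v hv,
    Finset.card_insert_of_notMem (pair_not_mem_image h v),
    Finset.card_image_of_injective _ hinj]

lemma permLen_rec {i : ℕ} (h : i + 1 < n) (v : Equiv.Perm (Fin n)) :
    permLen (adjSwap n i * v) = permLen v + 1 ∨ permLen v = permLen (adjSwap n i * v) + 1 := by
  set a : Fin n := ⟨i, Nat.lt_of_succ_lt h⟩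
  set b : Fin n := ⟨i + 1, h⟩
  have hab : a ≠ b := by simp [a, b, Fin.ext_iff]
  rcases lt_or_gt_of_ne (fun e => hab (v⁻¹.injective e) : v⁻¹ a ≠ v⁻¹ b) with hv | hv
  · exact Or.inl (card_invPairs_swap_mul h v hv)
  · right
    have hss : adjSwap n i * (adjSwap n i * v) = v := by
      rw [← mul_assoc, adjSwap_eq h, Equiv.swap_mul_self, one_mul]
    have hv' : (adjSwap n i * v)⁻¹ a < (adjSwap n i * v)⁻¹ b := by
      rw [mul_inv_rev, adjSwap_eq h, Equiv.swap_inv]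
      simp only [Equiv.Perm.mul_apply]
      rw [Equiv.swap_apply_left, Equiv.swap_apply_right]
      exact hv
    have := card_invPairs_swap_mul h (adjSwap n i * v) hv'
    rw [hss] at this
    omega

lemma permLen_one : permLen (1 : Equiv.Perm (Fin n)) = 0 := by
  rw [permLen]
  convert Finset.card_empty
  rw [Finset.eq_empty_iff_forall_notMem]
  intro p hp
  have hp := Finset.mem_filter.mp hp
  exact absurd hp.2.2 (not_lt.mpr hp.2.1.le)


noncomputable def piPoly (v : Equiv.Perm (Fin n)) : MvPolynomial (Fin n ⊕ Fin n) ℚ :=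
  ∏ p ∈ invPairs v, (X (Sum.inl p.1) - X (Sum.inl p.2))

def sC (w : Equiv.Perm (Fin n)) : Fin n ⊕ Fin n → Fin n ⊕ Fin n :=
  ⇑(Equiv.sumCongr w (Equiv.refl (Fin n)))

lemma swap_inl_apply (a b c : Fin n) :
    Equiv.swap (Sum.inl a : Fin n ⊕ Fin n) (Sum.inl b) (Sum.inl c)
      = Sum.inl (Equiv.swap a b c) := by
  simp only [Equiv.swap_apply_def]
  split_ifs <;> simp_all

lemma invPairs_one : invPairs (1 : Equiv.Perm (Fin n)) = ∅ := by
  rw [Finset.eq_empty_iff_forall_notMem]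
  intro p hp
  simp only [invPairs, Finset.mem_filter, inv_one, Equiv.Perm.one_apply] at hp
  exact absurd hp.2.2 (not_lt.mpr hp.2.1.le)

lemma piPoly_one : piPoly (1 : Equiv.Perm (Fin n)) = 1 := by
  rw [piPoly, invPairs_one, Finset.prod_empty]

lemma piPoly_swap_mul {i : ℕ} (h : i + 1 < n) (v : Equiv.Perm (Fin n))
    (hv : v⁻¹ ⟨i, Nat.lt_of_succ_lt h⟩ < v⁻¹ ⟨i + 1, h⟩) :
    piPoly (adjSwap n i * v)
      = (X (Sum.inl ⟨i, Nat.lt_of_succ_lt h⟩) - X (Sum.inl ⟨i + 1, h⟩))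
        * rename (sC (adjSwap n i)) (piPoly v) := by
  have hinj : Function.Injective (fun p : Fin n × Fin n =>
      (Equiv.swap (⟨i, Nat.lt_of_succ_lt h⟩ : Fin n) ⟨i + 1, h⟩ p.1,
       Equiv.swap (⟨i, Nat.lt_of_succ_lt h⟩ : Fin n) ⟨i + 1, h⟩ p.2)) := by
    intro x y hxy
    rw [Prod.ext_iff] at hxy ⊢
    exact ⟨(Equiv.swap _ _).injective hxy.1, (Equiv.swap _ _).injective hxy.2⟩
  rw [piPoly, invPairs_swap_mul h v hv, Finset.prod_insert (pair_not_mem_image h v),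
    Finset.prod_image (fun x _ y _ e => hinj e)]
  congr 1
  rw [piPoly, map_prod]
  apply Finset.prod_congr rfl
  intro p hp
  rw [map_sub, rename_X, rename_X]
  simp only [sC, adjSwap_eq h, Equiv.sumCongr_apply, Sum.map_inl]

lemma invPairs_w0 : invPairs (w0 n) = Finset.univ.filter (fun p : Fin n × Fin n => p.1 < p.2) := by
  apply Finset.filter_congr
  intro p _
  have hrev : (w0 n)⁻¹ = w0 n := rfl
  simp only [hrev, w0, Fin.revPerm_apply]
  constructor
  · rintro ⟨h1, _⟩; exact h1
  · intro h1; exact ⟨h1, Fin.rev_lt_rev.mpr h1⟩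


section Loc

variable (n : ℕ)

noncomputable def genSet : Set (MvPolynomial (Fin n ⊕ Fin n) ℚ) :=
  {r | ∃ a b : Fin n, a ≠ b ∧ r = X (Sum.inl a) - X (Sum.inl b)}

noncomputable def Sm : Submonoid (MvPolynomial (Fin n ⊕ Fin n) ℚ) := Submonoid.closure (genSet n)

abbrev Aring := Localization (Sm n)

noncomputable def iota : MvPolynomial (Fin n ⊕ Fin n) ℚ →+* Aring n :=
  algebraMap _ _

lemma genSet_ne_zero {r : MvPolynomial (Fin n ⊕ Fin n) ℚ} (hr : r ∈ genSet n) : r ≠ 0 := by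
  obtain ⟨a, b, hab, rfl⟩ := hr
  refine sub_ne_zero.mpr (fun e => hab ?_)
  exact Sum.inl_injective (MvPolynomial.X_injective e)

lemma Sm_le_nzd : Sm n ≤ nonZeroDivisors (MvPolynomial (Fin n ⊕ Fin n) ℚ) :=
  Submonoid.closure_le.mpr (fun r hr => mem_nonZeroDivisors_of_ne_zero (genSet_ne_zero n hr))

lemma iota_injective : Function.Injective (iota n) :=
  IsLocalization.injective _ (Sm_le_nzd n)

variable {n}

lemma rename_sC_mem (w : Equiv.Perm (Fin n)) :
    Sm n ≤ (Sm n).comap (rename (sC w) : _ →ₐ[ℚ] _).toRingHom := by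
  rw [Sm, Submonoid.closure_le]
  rintro r ⟨a, b, hab, rfl⟩
  simp only [Submonoid.coe_comap, Set.mem_preimage, AlgHom.toRingHom_eq_coe,
    RingHom.coe_coe, map_sub, rename_X]
  exact Submonoid.subset_closure ⟨w a, w b, fun e => hab (w.injective e), by simp [sC]⟩

noncomputable def sigmaA (w : Equiv.Perm (Fin n)) : Aring n →+* Aring n :=
  IsLocalization.map (Localization (Sm n)) (rename (sC w) : _ →ₐ[ℚ] _).toRingHom
    (rename_sC_mem w)

lemma sigmaA_iota (w : Equiv.Perm (Fin n)) (f : MvPolynomial (Fin n ⊕ Fin n) ℚ) :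
    sigmaA w (iota n f) = iota n (rename (sC w) f) := by
  simp [sigmaA, iota, IsLocalization.map_eq]

lemma sC_mul (u w : Equiv.Perm (Fin n)) : sC u ∘ sC w = sC (u * w) := by
  funext x
  cases x <;> simp [sC]

lemma sigmaA_sigmaA (u w : Equiv.Perm (Fin n)) (x : Aring n) :
    sigmaA u (sigmaA w x) = sigmaA (u * w) x := by
  have : (sigmaA u).comp (sigmaA w) = (sigmaA (u * w) : Aring n →+* Aring n) := by
    apply IsLocalization.ringHom_ext (Sm n)
    apply RingHom.ext
    intro f
    simp only [RingHom.comp_apply]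
    rw [show (algebraMap (MvPolynomial (Fin n ⊕ Fin n) ℚ) (Aring n)) f = iota n f from rfl,
      sigmaA_iota, sigmaA_iota, sigmaA_iota, rename_rename, sC_mul]
  exact congrFun (congrArg (fun g => g.toFun) this) x

lemma sC_one : sC (1 : Equiv.Perm (Fin n)) = id := by
  funext x; cases x <;> simp [sC]

lemma sigmaA_one (x : Aring n) : sigmaA (1 : Equiv.Perm (Fin n)) x = x := by
  have : (sigmaA 1 : Aring n →+* Aring n) = RingHom.id _ := by
    apply IsLocalization.ringHom_ext (Sm n)
    apply RingHom.ext
    intro f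
    simp only [RingHom.comp_apply, RingHom.id_apply]
    rw [show (algebraMap (MvPolynomial (Fin n ⊕ Fin n) ℚ) (Aring n)) f = iota n f from rfl,
      sigmaA_iota, sC_one, rename_id, AlgHom.id_apply]
  rw [this]; rfl

variable (n)

set_option maxHeartbeats 1000000 in
noncomputable def rInv (i : ℕ) : Aring n :=
  if h : i + 1 < n then
    Localization.mk 1 ⟨X (Sum.inl ⟨i, Nat.lt_of_succ_lt h⟩) - X (Sum.inl ⟨i + 1, h⟩),
      Submonoid.subset_closure ⟨⟨i, Nat.lt_of_succ_lt h⟩, ⟨i + 1, h⟩,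
        by simp [Fin.ext_iff], rfl⟩⟩
  else 0

set_option maxHeartbeats 1000000 in
lemma rInv_mul {i : ℕ} (h : i + 1 < n) :
    iota n (X (Sum.inl ⟨i, Nat.lt_of_succ_lt h⟩) - X (Sum.inl ⟨i + 1, h⟩)) * rInv n i = 1 := by
  rw [rInv, dif_pos h]
  rw [show (iota n) (X (Sum.inl ⟨i, Nat.lt_of_succ_lt h⟩) - X (Sum.inl ⟨i + 1, h⟩))
      = Localization.mk (X (Sum.inl ⟨i, Nat.lt_of_succ_lt h⟩) - X (Sum.inl ⟨i + 1, h⟩)) 1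
    from (Localization.mk_one_eq_algebraMap _).symm]
  rw [Localization.mk_mul, mul_one, one_mul]
  exact Localization.mk_self
    (⟨X (Sum.inl ⟨i, Nat.lt_of_succ_lt h⟩) - X (Sum.inl ⟨i + 1, h⟩), _⟩ : Sm n)

noncomputable def coeffs : List ℕ → Equiv.Perm (Fin n) → Aring n
  | [], w => if w = 1 then 1 else 0
  | i :: l, w => rInv n i * (coeffs l w - sigmaA (adjSwap n i) (coeffs l (adjSwap n i * w)))

end Loc


section Main

variable {n : ℕ}

lemma adjSwap_mul_self (n i : ℕ) : adjSwap n i * adjSwap n i = 1 := by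
  by_cases h : i + 1 < n
  · rw [adjSwap_eq h]; exact Equiv.swap_mul_self _ _
  · rw [adjSwap, dif_neg h]; exact mul_one 1

lemma sC_adjSwap_coe {i : ℕ} (h : i + 1 < n) :
    ⇑(Equiv.swap (Sum.inl (⟨i, Nat.lt_of_succ_lt h⟩ : Fin n) : Fin n ⊕ Fin n)
        (Sum.inl ⟨i + 1, h⟩)) = sC (adjSwap n i) := by
  funext x
  cases x with
  | inl c => rw [swap_inl_apply]; simp [sC, adjSwap_eq h, swap_inl_apply]
  | inr c =>
      rw [Equiv.swap_apply_of_ne_of_ne (by simp) (by simp)]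
      simp [sC]

lemma demAtX_iota {i : ℕ} (h : i + 1 < n) (g : MvPolynomial (Fin n ⊕ Fin n) ℚ) :
    iota n (demAtX n i g) = rInv n i * (iota n g - sigmaA (adjSwap n i) (iota n g)) := by
  have hspec := demazure_spec (Sum.inl (⟨i, Nat.lt_of_succ_lt h⟩ : Fin n) : Fin n ⊕ Fin n)
    (Sum.inl ⟨i + 1, h⟩) g
  have hdem : demAtX n i g
      = demazure (Sum.inl (⟨i, Nat.lt_of_succ_lt h⟩ : Fin n)) (Sum.inl ⟨i + 1, h⟩) g := by
    rw [demAtX, dif_pos h]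
  rw [hdem, sigmaA_iota, ← sC_adjSwap_coe h]
  have : iota n g - iota n (rename (⇑(Equiv.swap (Sum.inl (⟨i, Nat.lt_of_succ_lt h⟩ : Fin n))
        (Sum.inl ⟨i + 1, h⟩))) g)
      = iota n (X (Sum.inl ⟨i, Nat.lt_of_succ_lt h⟩) - X (Sum.inl ⟨i + 1, h⟩))
        * iota n (demazure (Sum.inl (⟨i, Nat.lt_of_succ_lt h⟩ : Fin n)) (Sum.inl ⟨i + 1, h⟩) g) := by
    rw [← map_mul, ← hspec, map_sub]
  rw [this, ← mul_assoc, mul_comm (rInv n i), rInv_mul n h, one_mul]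

lemma demWordX_eq_sum (l : List ℕ) (hl : ∀ i ∈ l, i + 1 < n)
    (f : MvPolynomial (Fin n ⊕ Fin n) ℚ) :
    iota n (demWordX n l f) = ∑ w : Equiv.Perm (Fin n), coeffs n l w * sigmaA w (iota n f) := by
  induction l with
  | nil =>
      rw [show demWordX n [] f = f from rfl]
      rw [Finset.sum_eq_single (1 : Equiv.Perm (Fin n))]
      · rw [show coeffs n [] (1 : Equiv.Perm (Fin n)) = 1 from if_pos rfl, one_mul, sigmaA_one]
      · intro w _ hw
        rw [show coeffs n [] w = 0 from if_neg hw, zero_mul]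
      · intro habs; exact absurd (Finset.mem_univ _) habs
  | cons i l ih =>
      have hi : i + 1 < n := hl i List.mem_cons_self
      have hl' : ∀ j ∈ l, j + 1 < n := fun j hj => hl j (List.mem_cons_of_mem i hj)
      have hIH := ih hl'
      rw [show demWordX n (i :: l) f = demAtX n i (demWordX n l f) from rfl]
      rw [demAtX_iota hi, hIH, map_sum]
      have hterm : ∀ w : Equiv.Perm (Fin n),
          sigmaA (adjSwap n i) (coeffs n l w * sigmaA w (iota n f))
            = sigmaA (adjSwap n i) (coeffs n l w) * sigmaA (adjSwap n i * w) (iota n f) := by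
        intro w
        rw [map_mul, sigmaA_sigmaA]
      simp only [hterm]
      have hre : ∑ w : Equiv.Perm (Fin n),
            sigmaA (adjSwap n i) (coeffs n l w) * sigmaA (adjSwap n i * w) (iota n f)
          = ∑ w : Equiv.Perm (Fin n),
            sigmaA (adjSwap n i) (coeffs n l (adjSwap n i * w)) * sigmaA w (iota n f) := by
        apply Fintype.sum_equiv (Equiv.mulLeft (adjSwap n i))
        intro w
        simp only [Equiv.coe_mulLeft]
        rw [← mul_assoc, adjSwap_mul_self, one_mul]
      rw [hre, ← Finset.sum_sub_distrib, Finset.mul_sum]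
      apply Finset.sum_congr rfl
      intro w _
      rw [show coeffs n (i :: l) w
          = rInv n i * (coeffs n l w - sigmaA (adjSwap n i) (coeffs n l (adjSwap n i * w)))
        from rfl]
      ring


lemma permLen_ge (l : List ℕ) (hl : ∀ i ∈ l, i + 1 < n) (w : Equiv.Perm (Fin n))
    (h : l.length < permLen w) : coeffs n l w = 0 := by
  induction l generalizing w with
  | nil =>
      have : w ≠ 1 := by
        rintro rfl
        rw [permLen_one] at h
        exact absurd h (by simp)
      exact if_neg this
  | cons i l ih =>
      have hi : i + 1 < n := hl i List.mem_cons_self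
      have hl' : ∀ j ∈ l, j + 1 < n := fun j hj => hl j (List.mem_cons_of_mem i hj)
      have h1 : coeffs n l w = 0 := ih hl' w (by simpa using Nat.lt_of_succ_lt h)
      have h2 : coeffs n l (adjSwap n i * w) = 0 := by
        apply ih hl'
        rcases permLen_rec hi w with hc | hc <;> simp only [List.length_cons] at h <;> omega
      rw [show coeffs n (i :: l) w
          = rInv n i * (coeffs n l w - sigmaA (adjSwap n i) (coeffs n l (adjSwap n i * w)))
        from rfl, h1, h2, map_zero, sub_zero, mul_zero]

lemma permLen_prod_le (l : List ℕ) (hl : ∀ i ∈ l, i + 1 < n) :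
    permLen ((l.map (adjSwap n)).prod) ≤ l.length := by
  induction l with
  | nil => simp [permLen_one]
  | cons i l ih =>
      have hi : i + 1 < n := hl i List.mem_cons_self
      have hl' : ∀ j ∈ l, j + 1 < n := fun j hj => hl j (List.mem_cons_of_mem i hj)
      rw [List.map_cons, List.prod_cons]
      have h2 := ih hl'
      rcases permLen_rec hi ((l.map (adjSwap n)).prod) with hc | hc <;>
        simp only [List.length_cons] <;> omega

lemma descent_of_permLen_succ {i : ℕ} (h : i + 1 < n) (v : Equiv.Perm (Fin n))
    (hp : permLen (adjSwap n i * v) = permLen v + 1) :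
    v⁻¹ ⟨i, Nat.lt_of_succ_lt h⟩ < v⁻¹ ⟨i + 1, h⟩ := by
  set a : Fin n := ⟨i, Nat.lt_of_succ_lt h⟩
  set b : Fin n := ⟨i + 1, h⟩
  have hab : a ≠ b := by simp [a, b, Fin.ext_iff]
  rcases lt_or_gt_of_ne (fun e => hab (v⁻¹.injective e) : v⁻¹ a ≠ v⁻¹ b) with hv | hv
  · exact hv
  · exfalso
    have hss : adjSwap n i * (adjSwap n i * v) = v := by
      rw [← mul_assoc, adjSwap_mul_self, one_mul]
    have hv' : (adjSwap n i * v)⁻¹ a < (adjSwap n i * v)⁻¹ b := by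
      rw [mul_inv_rev, adjSwap_eq h, Equiv.swap_inv]
      simp only [Equiv.Perm.mul_apply]
      rw [Equiv.swap_apply_left, Equiv.swap_apply_right]
      exact hv
    have := card_invPairs_swap_mul h (adjSwap n i * v) hv'
    rw [hss] at this
    omega

lemma coeffs_reduced (l : List ℕ) (hl : ∀ i ∈ l, i + 1 < n)
    (hred : l.length = permLen ((l.map (adjSwap n)).prod)) :
    iota n (piPoly ((l.map (adjSwap n)).prod)) * coeffs n l ((l.map (adjSwap n)).prod)
      = (-1) ^ l.length := by
  induction l with
  | nil =>
      simp only [List.map_nil, List.prod_nil, piPoly_one, map_one, one_mul, List.length_nil,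
        pow_zero]
      exact if_pos rfl
  | cons i l ih =>
      have hi : i + 1 < n := hl i List.mem_cons_self
      have hl' : ∀ j ∈ l, j + 1 < n := fun j hj => hl j (List.mem_cons_of_mem i hj)
      set v' := (l.map (adjSwap n)).prod with hv'
      have hprod : ((i :: l).map (adjSwap n)).prod = adjSwap n i * v' := by
        rw [List.map_cons, List.prod_cons]
      rw [hprod] at hred ⊢
      simp only [List.length_cons] at hred ⊢
      have hlen' : permLen v' = l.length := by
        have h1 := permLen_prod_le l hl'
        rw [← hv'] at h1
        rcases permLen_rec hi v' with hc | hc <;> omega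
      have hsucc : permLen (adjSwap n i * v') = permLen v' + 1 := by omega
      have hdesc := descent_of_permLen_succ hi v' hsucc
      have hvanish : coeffs n l (adjSwap n i * v') = 0 :=
        permLen_ge l hl' _ (by omega)
      have hback : adjSwap n i * (adjSwap n i * v') = v' := by
        rw [← mul_assoc, adjSwap_mul_self, one_mul]
      have hcoef : coeffs n (i :: l) (adjSwap n i * v')
          = -(rInv n i * sigmaA (adjSwap n i) (coeffs n l v')) := by
        rw [show coeffs n (i :: l) (adjSwap n i * v')
            = rInv n i * (coeffs n l (adjSwap n i * v')
              - sigmaA (adjSwap n i) (coeffs n l (adjSwap n i * (adjSwap n i * v'))))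
          from rfl, hvanish, hback]
        ring
      rw [hcoef, piPoly_swap_mul hi v' hdesc, map_mul]
      have hsig : iota n (rename (sC (adjSwap n i)) (piPoly v'))
          = sigmaA (adjSwap n i) (iota n (piPoly v')) := (sigmaA_iota _ _).symm
      rw [hsig]
      have hIH := ih hl' hlen'.symm
      calc iota n (X (Sum.inl ⟨i, Nat.lt_of_succ_lt hi⟩) - X (Sum.inl ⟨i + 1, hi⟩))
            * sigmaA (adjSwap n i) (iota n (piPoly v'))
            * -(rInv n i * sigmaA (adjSwap n i) (coeffs n l v'))
          = -((iota n (X (Sum.inl ⟨i, Nat.lt_of_succ_lt hi⟩) - X (Sum.inl ⟨i + 1, hi⟩))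
              * rInv n i)
              * (sigmaA (adjSwap n i) (iota n (piPoly v'))
                * sigmaA (adjSwap n i) (coeffs n l v'))) := by ring
        _ = -(sigmaA (adjSwap n i) (iota n (piPoly v') * coeffs n l v')) := by
              rw [rInv_mul n hi, one_mul, map_mul]
        _ = -(sigmaA (adjSwap n i) ((-1) ^ l.length)) := by rw [hIH]
        _ = (-1) ^ (l.length + 1) := by
              rw [map_pow, map_neg, map_one]
              ring


lemma strictMono_perm_eq_one {v : Equiv.Perm (Fin n)} (h : StrictMono ⇑v) : v = 1 := by
  have hsurj : Function.Surjective ⇑v := v.surjective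
  apply Equiv.ext
  intro x
  have h1 := Fin.coe_orderIso_apply (StrictMono.orderIsoOfSurjective ⇑v h hsurj) x
  rw [show ((StrictMono.orderIsoOfSurjective ⇑v h hsurj) x : Fin n) = v x from
    congrFun (StrictMono.coe_orderIsoOfSurjective ⇑v h hsurj) x] at h1
  exact Fin.ext h1

lemma exists_descent_or_id (v : Equiv.Perm (Fin n)) :
    v = 1 ∨ ∃ i : ℕ, ∃ h : i + 1 < n, v⁻¹ ⟨i + 1, h⟩ < v⁻¹ ⟨i, Nat.lt_of_succ_lt h⟩ := by
  by_cases hd : ∃ i : ℕ, ∃ h : i + 1 < n, v⁻¹ ⟨i + 1, h⟩ < v⁻¹ ⟨i, Nat.lt_of_succ_lt h⟩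
  · exact Or.inr hd
  · push_neg at hd
    left
    have hinc : ∀ (i : ℕ) (h : i + 1 < n),
        v⁻¹ ⟨i, Nat.lt_of_succ_lt h⟩ < v⁻¹ ⟨i + 1, h⟩ := by
      intro i h
      have hne : v⁻¹ ⟨i, Nat.lt_of_succ_lt h⟩ ≠ v⁻¹ ⟨i + 1, h⟩ :=
        fun e => by simpa [Fin.ext_iff] using v⁻¹.injective e
      rcases lt_or_gt_of_ne hne with hlt | hgt
      · exact hlt
      · exact absurd hgt (not_lt.mpr (hd i h))
    have hsm : StrictMono ⇑v⁻¹ := by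
      cases n with
      | zero => intro x; exact absurd x.isLt (by omega)
      | succ m =>
          rw [Fin.strictMono_iff_lt_succ]
          intro i
          have := hinc i.val (by omega)
          exact this
    have : v⁻¹ = 1 := strictMono_perm_eq_one hsm
    rw [← inv_inv v, this, inv_one]

lemma exists_reduced_word_aux : ∀ (k : ℕ) (v : Equiv.Perm (Fin n)), permLen v = k →
    ∃ l, IsReducedWord n v l := by
  intro k
  induction k using Nat.strong_induction_on with
  | _ k ih =>
    intro v hv
    rcases exists_descent_or_id v with rfl | ⟨i, h, hdes⟩
    · exact ⟨[], fun i hi => absurd hi List.not_mem_nil, by simp, by simp [permLen_one]⟩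
    · set v' := adjSwap n i * v with hv'
      have hback : adjSwap n i * v' = v := by
        rw [hv', ← mul_assoc, adjSwap_mul_self, one_mul]
      have hd' : v'⁻¹ ⟨i, Nat.lt_of_succ_lt h⟩ < v'⁻¹ ⟨i + 1, h⟩ := by
        rw [hv', mul_inv_rev, adjSwap_eq h, Equiv.swap_inv]
        simp only [Equiv.Perm.mul_apply]
        rw [Equiv.swap_apply_left, Equiv.swap_apply_right]
        exact hdes
      have hlen : permLen v = permLen v' + 1 := by
        have := card_invPairs_swap_mul h v' hd'
        rw [hback] at this
        exact this
      obtain ⟨l', hl'1, hl'2, hl'3⟩ := ih (permLen v') (by omega) v' rfl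
      refine ⟨i :: l', ?_, ?_, ?_⟩
      · intro j hj
        rcases List.mem_cons.mp hj with rfl | hj
        · exact h
        · exact hl'1 j hj
      · rw [List.map_cons, List.prod_cons, hl'2, hback]
      · simp [hl'3, hlen, hv]

lemma exists_reduced_word (v : Equiv.Perm (Fin n)) : ∃ l, IsReducedWord n v l :=
  exists_reduced_word_aux (permLen v) v rfl


section Psi

variable {n : ℕ}

noncomputable def psiR (n : ℕ) :
    MvPolynomial (Fin n ⊕ Fin n) ℚ →+* MvPolynomial (Fin n) ℚ :=
  (rename (Sum.elim id id) : MvPolynomial (Fin n ⊕ Fin n) ℚ →ₐ[ℚ] MvPolynomial (Fin n) ℚ).toRingHom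

abbrev Kfield (n : ℕ) := FractionRing (MvPolynomial (Fin n) ℚ)

noncomputable def iotaK (n : ℕ) : MvPolynomial (Fin n) ℚ →+* Kfield n := algebraMap _ _

lemma iotaK_injective : Function.Injective (iotaK n) := IsFractionRing.injective _ _

lemma psiK_unit : ∀ y : Sm n, IsUnit ((iotaK n).comp (psiR n) y) := by
  rintro ⟨y, hy⟩
  induction hy using Submonoid.closure_induction with
  | mem r hr =>
      obtain ⟨a, b, hab, rfl⟩ := hr
      simp only [RingHom.comp_apply, psiR, AlgHom.toRingHom_eq_coe, RingHom.coe_coe, map_sub,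
        rename_X, Sum.elim_inl, id_eq]
      refine isUnit_iff_ne_zero.mpr ?_
      rw [ne_eq, sub_eq_zero]
      intro e
      exact hab (MvPolynomial.X_injective (iotaK_injective e))
  | one => simpa using isUnit_one
  | mul x y _ _ hx hy => simpa [map_mul] using hx.mul hy

noncomputable def psiHat (n : ℕ) : Aring n →+* Kfield n :=
  IsLocalization.lift (M := Sm n) (S := Aring n) psiK_unit

lemma psiHat_iota (f : MvPolynomial (Fin n ⊕ Fin n) ℚ) :
    psiHat n (iota n f) = iotaK n (psiR n f) :=
  IsLocalization.lift_eq psiK_unit f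

lemma psiR_rename_sC (w : Equiv.Perm (Fin n)) (f : MvPolynomial (Fin n ⊕ Fin n) ℚ) :
    psiR n (rename (sC w) f) = rename (Sum.elim ⇑w id) f := by
  have : psiR n (rename (sC w) f) = rename (Sum.elim id id) (rename (sC w) f) := rfl
  rw [this, rename_rename]
  have hfun : (Sum.elim (id : Fin n → Fin n) id ∘ sC w) = Sum.elim ⇑w id := by
    funext x; cases x <;> simp [sC]
  rw [hfun]

lemma psiR_schubProd_ne {w : Equiv.Perm (Fin n)} (hw : w ≠ w0 n) :
    psiR n (rename (sC w) (schubProd n)) = 0 := by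
  rw [psiR_rename_sC, schubProd, map_prod]
  have hex : ∃ i : Fin n, w i < w0 n i := by
    by_contra hc
    push_neg at hc
    have hne : ∃ i, w0 n i ≠ w i := by
      by_contra hc2
      push_neg at hc2
      exact hw (Equiv.ext (fun x => (hc2 x).symm))
    obtain ⟨i0, hi0⟩ := hne
    have hsum : ∑ i : Fin n, ((w0 n i : ℕ)) < ∑ i : Fin n, ((w i : ℕ)) := by
      apply Finset.sum_lt_sum
      · intro i _
        exact Fin.le_def.mp (hc i)
      · exact ⟨i0, Finset.mem_univ i0, Fin.lt_def.mp (lt_of_le_of_ne (hc i0) hi0)⟩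
    have h1 : ∑ i : Fin n, ((w0 n i : ℕ)) = ∑ i : Fin n, (i : ℕ) :=
      Equiv.sum_comp (w0 n) (fun j : Fin n => (j : ℕ))
    have h2 : ∑ i : Fin n, ((w i : ℕ)) = ∑ i : Fin n, (i : ℕ) :=
      Equiv.sum_comp w (fun j : Fin n => (j : ℕ))
    omega
  obtain ⟨i, hi⟩ := hex
  have hcond : (i : ℕ) + ((w i : ℕ)) + 2 ≤ n := by
    have h1 : (w i : ℕ) < (w0 n i : ℕ) := hi
    have h2 : (w0 n i : ℕ) = n - ((i : ℕ) + 1) := by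
      rw [show w0 n i = Fin.rev i from rfl, Fin.val_rev]
    have h3 : (i : ℕ) < n := i.isLt
    omega
  apply Finset.prod_eq_zero (i := (i, w i))
  · simp only [Finset.mem_filter, Finset.mem_univ, true_and]
    omega
  · simp


noncomputable def Delta (n : ℕ) : MvPolynomial (Fin n) ℚ :=
  ∏ p ∈ Finset.univ.filter (fun p : Fin n × Fin n => p.1 < p.2), (X p.1 - X p.2)

lemma card_pairs (n : ℕ) :
    (Finset.univ.filter (fun p : Fin n × Fin n => (p.1 : ℕ) + (p.2 : ℕ) + 2 ≤ n)).card
      = (Finset.univ.filter (fun p : Fin n × Fin n => p.1 < p.2)).card := by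
  apply Finset.card_nbij' (fun p => (p.2, Fin.rev p.1)) (fun q => (Fin.rev q.2, q.1))
  · intro p hp
    simp only [Finset.mem_coe, Finset.mem_filter, Finset.mem_univ, true_and] at hp ⊢
    have := Fin.val_rev p.1
    simp only [Fin.lt_def, this]
    have h1 : (p.1 : ℕ) < n := p.1.isLt
    omega
  · intro q hq
    simp only [Finset.mem_coe, Finset.mem_filter, Finset.mem_univ, true_and, Fin.lt_def] at hq ⊢
    have := Fin.val_rev q.2
    have h1 : (q.2 : ℕ) < n := q.2.isLt
    omega
  · intro p _
    simp [Fin.rev_rev]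
  · intro q _
    simp [Fin.rev_rev]

lemma permLen_w0 (n : ℕ) :
    permLen (w0 n) = (Finset.univ.filter (fun p : Fin n × Fin n => p.1 < p.2)).card := by
  rw [permLen]
  congr 1
  apply Finset.filter_congr
  intro p _
  constructor
  · rintro ⟨h1, _⟩; exact h1
  · intro h1
    exact ⟨h1, by
      rw [show w0 n p.2 = Fin.rev p.2 from rfl, show w0 n p.1 = Fin.rev p.1 from rfl]
      exact Fin.rev_lt_rev.mpr h1⟩

lemma psiR_piPoly_w0 (n : ℕ) : psiR n (piPoly (w0 n)) = Delta n := by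
  rw [piPoly, invPairs_w0, map_prod, Delta]
  apply Finset.prod_congr rfl
  intro p _
  rw [show (psiR n) (X (Sum.inl p.1) - X (Sum.inl p.2))
      = rename (Sum.elim id id) (X (Sum.inl p.1) - X (Sum.inl p.2)) from rfl]
  simp

lemma psiR_w0_schubProd (n : ℕ) :
    psiR n (rename (sC (w0 n)) (schubProd n))
      = (-1) ^ (Finset.univ.filter (fun p : Fin n × Fin n => p.1 < p.2)).card * Delta n := by
  rw [psiR_rename_sC, schubProd, map_prod]
  have hfac : ∀ p : Fin n × Fin n,
      rename (Sum.elim ⇑(w0 n) id)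
          ((X (Sum.inl p.1) - X (Sum.inr p.2) : MvPolynomial (Fin n ⊕ Fin n) ℚ))
        = (X (Fin.rev p.1) - X p.2 : MvPolynomial (Fin n) ℚ) := by
    intro p
    rw [map_sub, rename_X, rename_X]
    rfl
  simp only [hfac]
  have hbij : ∏ p ∈ Finset.univ.filter
        (fun p : Fin n × Fin n => (p.1 : ℕ) + (p.2 : ℕ) + 2 ≤ n),
        (X (Fin.rev p.1) - X p.2 : MvPolynomial (Fin n) ℚ)
      = ∏ q ∈ Finset.univ.filter (fun p : Fin n × Fin n => p.1 < p.2),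
        (X q.2 - X q.1 : MvPolynomial (Fin n) ℚ) := by
    apply Finset.prod_nbij' (fun p => (p.2, Fin.rev p.1)) (fun q => (Fin.rev q.2, q.1))
    · intro p hp
      simp only [Finset.mem_filter, Finset.mem_univ, true_and] at hp ⊢
      have := Fin.val_rev p.1
      simp only [Fin.lt_def, this]
      have h1 : (p.1 : ℕ) < n := p.1.isLt
      omega
    · intro q hq
      simp only [Finset.mem_filter, Finset.mem_univ, true_and, Fin.lt_def] at hq ⊢
      have := Fin.val_rev q.2
      have h1 : (q.2 : ℕ) < n := q.2.isLt
      omega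
    · intro p _
      simp [Fin.rev_rev]
    · intro q _
      simp [Fin.rev_rev]
    · intro p _
      simp
  rw [hbij]
  have : ∀ q : Fin n × Fin n, (X q.2 - X q.1 : MvPolynomial (Fin n) ℚ)
      = (-1) * (X q.1 - X q.2) := by intro q; ring
  simp only [this]
  rw [Finset.prod_mul_distrib, Finset.prod_const, Delta]

end Psi

end Main


section Homog

lemma mul_homogeneousComponent {σ : Type} [DecidableEq σ] (q g : MvPolynomial σ ℚ) (k N : ℕ)
    (hq : q.IsHomogeneous k) :
    homogeneousComponent (k + N) (q * g) = q * homogeneousComponent N g := by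
  conv_lhs => rw [← sum_homogeneousComponent g]
  rw [Finset.mul_sum, map_sum]
  have hterm : ∀ e, homogeneousComponent (k + N) (q * homogeneousComponent e g)
      = if e = N then q * homogeneousComponent e g else 0 := by
    intro e
    have hhom : (q * homogeneousComponent e g).IsHomogeneous (k + e) :=
      hq.mul (homogeneousComponent_isHomogeneous e g)
    rw [homogeneousComponent_of_mem ((mem_homogeneousSubmodule (k + e)
      (q * homogeneousComponent e g)).mpr hhom)]
    by_cases he : e = N
    · subst he; simp
    · rw [if_neg (by omega), if_neg he]
  simp_rw [hterm]
  rw [Finset.sum_ite_eq' (Finset.range (g.totalDegree + 1)) N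
      (fun e => q * homogeneousComponent e g)]
  split_ifs with hN
  · rfl
  · have h0 : homogeneousComponent N g = 0 :=
      homogeneousComponent_eq_zero _ g (by simp only [Finset.mem_range] at hN; omega)
    rw [h0, mul_zero]

lemma demazure_isHomogeneous {σ : Type} [DecidableEq σ] {i j : σ} (hij : i ≠ j)
    {f : MvPolynomial σ ℚ} {d : ℕ} (hf : f.IsHomogeneous (d + 1)) :
    (demazure i j f).IsHomogeneous d := by
  set g := demazure i j f with hg
  have hF : ((X i - X j) * g).IsHomogeneous (d + 1) := by
    rw [hg, ← demazure_spec i j f]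
    exact hf.sub hf.rename_isHomogeneous
  have hq : (X i - X j : MvPolynomial σ ℚ).IsHomogeneous 1 :=
    (isHomogeneous_X _ _).sub (isHomogeneous_X _ _)
  have hcomp : ∀ e, e ≠ d → homogeneousComponent e g = 0 := by
    intro e he
    have h1 : (X i - X j) * homogeneousComponent e g
        = homogeneousComponent (1 + e) ((X i - X j) * g) :=
      (mul_homogeneousComponent _ _ _ _ hq).symm
    have h2 : homogeneousComponent (1 + e) ((X i - X j) * g) = 0 := by
      rw [homogeneousComponent_of_mem ((mem_homogeneousSubmodule (d + 1)
        ((X i - X j) * g)).mpr hF)]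
      exact if_neg (by omega)
    rcases mul_eq_zero.mp (h1.trans h2) with h | h
    · exact absurd h (X_sub_X_ne_zero hij)
    · exact h
  have hgd : g = homogeneousComponent d g := by
    conv_lhs => rw [← sum_homogeneousComponent g]
    exact Finset.sum_eq_single d (fun e _ he => hcomp e he)
      (fun hd => homogeneousComponent_eq_zero _ _
        (by simp only [Finset.mem_range] at hd; omega))
  rw [hgd]
  exact homogeneousComponent_isHomogeneous d g

lemma demWordX_isHomogeneous {n : ℕ} (l : List ℕ) (hl : ∀ i ∈ l, i + 1 < n)
    (f : MvPolynomial (Fin n ⊕ Fin n) ℚ) (m : ℕ) (hf : f.IsHomogeneous m)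
    (hm : l.length ≤ m) : (demWordX n l f).IsHomogeneous (m - l.length) := by
  induction l with
  | nil => simpa [demWordX] using hf
  | cons i l ih =>
      have hi : i + 1 < n := hl i List.mem_cons_self
      have hl' : ∀ j ∈ l, j + 1 < n := fun j hj => hl j (List.mem_cons_of_mem i hj)
      simp only [List.length_cons] at hm
      have hIH := ih hl' (by omega)
      rw [show demWordX n (i :: l) f = demAtX n i (demWordX n l f) from rfl]
      rw [show demAtX n i = demazure (Sum.inl (⟨i, Nat.lt_of_succ_lt hi⟩ : Fin n))
          (Sum.inl ⟨i + 1, hi⟩) from dif_pos hi]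
      have hij : (Sum.inl (⟨i, Nat.lt_of_succ_lt hi⟩ : Fin n) : Fin n ⊕ Fin n)
          ≠ Sum.inl ⟨i + 1, hi⟩ := by simp [Fin.ext_iff]
      have hcast : m - l.length = (m - (l.length + 1)) + 1 := by omega
      rw [hcast] at hIH
      have := demazure_isHomogeneous hij hIH
      simpa using this

lemma isHomogeneous_schubProd (n : ℕ) :
    (schubProd n).IsHomogeneous
      ((Finset.univ.filter (fun p : Fin n × Fin n => (p.1 : ℕ) + (p.2 : ℕ) + 2 ≤ n)).card) := by
  have := MvPolynomial.IsHomogeneous.prod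
    (Finset.univ.filter (fun p : Fin n × Fin n => (p.1 : ℕ) + (p.2 : ℕ) + 2 ≤ n))
    (fun p => (X (Sum.inl p.1) - X (Sum.inr p.2) : MvPolynomial (Fin n ⊕ Fin n) ℚ))
    (fun _ => 1)
    (fun p _ => (isHomogeneous_X _ _).sub (isHomogeneous_X _ _))
  rw [schubProd]
  simpa using this

lemma eq_C_of_isHomogeneous_zero {σ : Type} [DecidableEq σ] {p : MvPolynomial σ ℚ}
    (hp : p.IsHomogeneous 0) : p = C (constantCoeff p) := by
  apply MvPolynomial.ext
  intro m
  rcases eq_or_ne m 0 with rfl | hm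
  · simp [constantCoeff_eq]
  · rw [hp.coeff_eq_zero (by
      rw [ne_eq, Finsupp.degree_eq_zero_iff]
      exact hm)]
    rw [coeff_C, if_neg (Ne.symm hm)]

end Homog


set_option maxHeartbeats 1000000 in
set_option synthInstance.maxHeartbeats 400000 in
theorem demWord_w0 {n : ℕ} (l : List ℕ) (hrw : IsReducedWord n (w0 n) l) :
    demWordX n l (schubProd n) = 1 := by
  obtain ⟨hl, hprod, hlen⟩ := hrw
  set N := (Finset.univ.filter (fun p : Fin n × Fin n => p.1 < p.2)).card with hN
  have hlenN : l.length = N := by rw [hlen, permLen_w0]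
  -- constancy
  have hhomN : (schubProd n).IsHomogeneous l.length := by
    have h1 := isHomogeneous_schubProd n
    rw [card_pairs] at h1
    rwa [hlenN]
  have hhom0 : (demWordX n l (schubProd n)).IsHomogeneous 0 := by
    have h2 := demWordX_isHomogeneous l hl _ l.length hhomN le_rfl
    simpa using h2
  set c : ℚ := constantCoeff (demWordX n l (schubProd n)) with hc
  have hDfC : demWordX n l (schubProd n) = C c := eq_C_of_isHomogeneous_zero hhom0
  -- sum identity
  have hkey := demWordX_eq_sum l hl (schubProd n)
  -- coefficient value
  have hred' : l.length = permLen ((l.map (adjSwap n)).prod) := by rw [hprod]; exact hlen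
  have hcoef := coeffs_reduced l hl hred'
  rw [hprod] at hcoef
  -- apply psiHat
  have happ := congrArg (psiHat n) hkey
  rw [psiHat_iota, map_sum] at happ
  have hcol : ∑ w : Equiv.Perm (Fin n),
        psiHat n (coeffs n l w * sigmaA w (iota n (schubProd n)))
      = psiHat n (coeffs n l (w0 n)) * iotaK n ((-1) ^ N * Delta n) := by
    rw [Finset.sum_eq_single (w0 n)]
    · rw [map_mul, sigmaA_iota, psiHat_iota, psiR_w0_schubProd]
    · intro w _ hw
      rw [map_mul, sigmaA_iota, psiHat_iota, psiR_schubProd_ne hw, map_zero, mul_zero]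
    · intro h; exact absurd (Finset.mem_univ _) h
  rw [hcol] at happ
  have hcoefK := congrArg (psiHat n) hcoef
  rw [map_mul, psiHat_iota, psiR_piPoly_w0] at hcoefK
  have hpow : psiHat n ((-1 : Aring n) ^ l.length) = (-1 : Kfield n) ^ N := by
    rw [map_pow, map_neg, map_one, hlenN]
  rw [hpow] at hcoefK
  -- combine
  have hone : ((-1 : Kfield n) ^ N) * ((-1 : Kfield n) ^ N) = 1 := by
    rw [← pow_add]
    exact Even.neg_one_pow ⟨N, rfl⟩
  have hD : iotaK n (psiR n (demWordX n l (schubProd n))) * iotaK n (Delta n)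
      = iotaK n (Delta n) := by
    rw [happ]
    have hsplit : iotaK n ((-1) ^ N * Delta n)
        = (-1 : Kfield n) ^ N * iotaK n (Delta n) := by
      rw [map_mul, map_pow, map_neg, map_one]
    rw [hsplit]
    calc psiHat n (coeffs n l (w0 n)) * ((-1 : Kfield n) ^ N * iotaK n (Delta n))
          * iotaK n (Delta n)
        = (iotaK n (Delta n) * psiHat n (coeffs n l (w0 n)))
          * ((-1 : Kfield n) ^ N) * iotaK n (Delta n) := by ring
      _ = ((-1 : Kfield n) ^ N) * ((-1 : Kfield n) ^ N) * iotaK n (Delta n) := by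
          rw [hcoefK]
      _ = iotaK n (Delta n) := by rw [hone, one_mul]
  have hDelta_ne : Delta n ≠ 0 := by
    rw [Delta]
    rw [Finset.prod_ne_zero_iff]
    intro p hp
    simp only [Finset.mem_filter, Finset.mem_univ, true_and] at hp
    exact X_sub_X_ne_zero (ne_of_lt hp)
  have hmul : psiR n (demWordX n l (schubProd n)) * Delta n = Delta n := by
    apply iotaK_injective
    rw [map_mul]
    exact hD
  have hpsi1 : psiR n (demWordX n l (schubProd n)) = 1 :=
    mul_right_cancel₀ hDelta_ne (hmul.trans (one_mul (Delta n)).symm)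
  rw [hDfC] at hpsi1 ⊢
  rw [show psiR n (C c) = (C c : MvPolynomial (Fin n) ℚ) from rename_C _ c] at hpsi1
  have hc1 : c = 1 := by
    have := congrArg constantCoeff hpsi1
    simpa using this
  rw [hc1, map_one]

end SchubAux

/-- Applying `∂ˣ_{w₀}` to `∏_{i+j≤n} (xᵢ - tⱼ)` yields `1`; equivalently, the double
Schubert polynomial of the identity permutation is `1`. -/
theorem schubert_id_eq_one (n : ℕ) (hn : 1 ≤ n) :
    demazureOfX n (w0 n) (schubProd n) = 1 ∧ schubert n 1 = 1 := by
  have hex : ∃ l, IsReducedWord n (w0 n) l := SchubAux.exists_reduced_word (w0 n)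
  have h1 : demazureOfX n (w0 n) (schubProd n) = 1 := by
    rw [demazureOfX, dif_pos hex]
    exact SchubAux.demWord_w0 hex.choose hex.choose_spec
  refine ⟨h1, ?_⟩
  rw [schubert, inv_one, one_mul]
  exact h1
end

section
/- Let n ≥ 1, w ∈ S_n and 1 ≤ i ≤ n−1. If ℓ(w s_i) = ℓ(w) − 1, then ∂^x_i 𝔖_w(x,t) = 𝔖_{w s_i}(x,t); if ℓ(w s_i) = ℓ(w) + 1, then ∂^x_i 𝔖_w(x,t) = 0. Here ∂^x_i is the Demazure operator in the x-variables and 𝔖_w(x,t) is the double Schubert polynomial of w. -/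
open MvPolynomial
open scoped Classical

namespace Dem

variable {σ : Type} [DecidableEq σ]

lemma rename_swap_swap (a b : σ) (f : MvPolynomial σ ℚ) :
    rename (Equiv.swap a b) (rename (Equiv.swap a b) f) = f := by
  rw [rename_rename]
  have : (Equiv.swap a b : σ → σ) ∘ (Equiv.swap a b : σ → σ) = id := by
    funext x; simp [Equiv.swap_apply_self]
  rw [this, rename_id, AlgHom.id_apply]

omit [DecidableEq σ] in
lemma X_sub_X_ne_zero {a b : σ} (hab : a ≠ b) :
    (X a - X b : MvPolynomial σ ℚ) ≠ 0 := by
  intro h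
  exact hab (X_injective (by linear_combination h))

lemma dvd_sub_rename_swap (a b : σ) (f : MvPolynomial σ ℚ) :
    (X a - X b) ∣ f - rename (Equiv.swap a b) f := by
  induction f using MvPolynomial.induction_on with
  | C c => simp [rename_C]
  | add p q hp hq =>
    rw [map_add]
    have : p + q - (rename (Equiv.swap a b) p + rename (Equiv.swap a b) q)
        = (p - rename (Equiv.swap a b) p) + (q - rename (Equiv.swap a b) q) := by ring
    rw [this]; exact dvd_add hp hq
  | mul_X p k hp =>
    rw [map_mul, rename_X]
    have : p * X k - rename (Equiv.swap a b) p * X (Equiv.swap a b k)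
        = p * (X k - X (Equiv.swap a b k))
          + (p - rename (Equiv.swap a b) p) * X (Equiv.swap a b k) := by ring
    rw [this]
    refine dvd_add (Dvd.dvd.mul_left ?_ p) (hp.mul_right _)
    rcases eq_or_ne k a with rfl | hka
    · simp [Equiv.swap_apply_left]
    rcases eq_or_ne k b with rfl | hkb
    · rw [Equiv.swap_apply_right]
      exact ⟨-1, by ring⟩
    · rw [Equiv.swap_apply_of_ne_of_ne hka hkb]; simp

lemma demazure_spec (a b : σ) (f : MvPolynomial σ ℚ) :
    f - rename (Equiv.swap a b) f = (X a - X b) * demazure a b f := by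
  obtain ⟨g, hg⟩ := dvd_sub_rename_swap a b f
  have h : ∃ g, f - rename (Equiv.swap a b) f = (X a - X b) * g := ⟨g, hg⟩
  rw [demazure, dif_pos h]
  exact h.choose_spec

lemma demazure_eq {a b : σ} (hab : a ≠ b) {f g : MvPolynomial σ ℚ}
    (hg : f - rename (Equiv.swap a b) f = (X a - X b) * g) :
    demazure a b f = g :=
  mul_left_cancel₀ (X_sub_X_ne_zero hab) ((demazure_spec a b f).symm.trans hg)

lemma rename_swap_demazure {a b : σ} (hab : a ≠ b) (f : MvPolynomial σ ℚ) :
    rename (Equiv.swap a b) (demazure a b f) = demazure a b f := by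
  have h := congrArg (fun p => rename (Equiv.swap a b) p) (demazure_spec a b f)
  simp only [map_sub, map_mul, rename_X, Equiv.swap_apply_left,
    Equiv.swap_apply_right, rename_swap_swap] at h
  have h2 : f - rename (Equiv.swap a b) f
      = (X a - X b) * rename (Equiv.swap a b) (demazure a b f) := by
    linear_combination -h
  exact (demazure_eq hab h2).symm

lemma demazure_of_invariant {a b : σ} (hab : a ≠ b) {f : MvPolynomial σ ℚ}
    (hf : rename (Equiv.swap a b) f = f) : demazure a b f = 0 :=
  demazure_eq hab (by rw [hf]; ring)

lemma demazure_demazure {a b : σ} (hab : a ≠ b) (f : MvPolynomial σ ℚ) :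
    demazure a b (demazure a b f) = 0 :=
  demazure_of_invariant hab (rename_swap_demazure hab f)

lemma swap_comp_swap_of_disjoint {a b c d : σ} (hac : a ≠ c) (had : a ≠ d)
    (hbc : b ≠ c) (hbd : b ≠ d) :
    (Equiv.swap a b : σ → σ) ∘ (Equiv.swap c d : σ → σ)
      = (Equiv.swap c d : σ → σ) ∘ (Equiv.swap a b : σ → σ) := by
  funext x
  simp only [Function.comp, Equiv.swap_apply_def]
  split_ifs <;> simp_all

lemma demazure_comm {a b c d : σ} (hab : a ≠ b) (hcd : c ≠ d)
    (hac : a ≠ c) (had : a ≠ d) (hbc : b ≠ c) (hbd : b ≠ d)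
    (f : MvPolynomial σ ℚ) :
    demazure a b (demazure c d f) = demazure c d (demazure a b f) := by
  symm
  apply demazure_eq hcd
  apply mul_left_cancel₀ (X_sub_X_ne_zero hab)
  have e3 : f - rename (Equiv.swap a b) f = (X a - X b) * demazure a b f :=
    demazure_spec a b f
  have e1 : f - rename (Equiv.swap c d) f = (X c - X d) * demazure c d f :=
    demazure_spec c d f
  have e2 : demazure c d f - rename (Equiv.swap a b) (demazure c d f)
      = (X a - X b) * demazure a b (demazure c d f) := demazure_spec a b _
  have e3t := congrArg (fun p => rename (Equiv.swap c d) p) e3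
  have e1s := congrArg (fun p => rename (Equiv.swap a b) p) e1
  simp only [map_sub, map_mul, rename_X] at e3t e1s
  rw [Equiv.swap_apply_of_ne_of_ne hac had, Equiv.swap_apply_of_ne_of_ne hbc hbd] at e3t
  rw [Equiv.swap_apply_of_ne_of_ne (Ne.symm hac) (Ne.symm hbc),
    Equiv.swap_apply_of_ne_of_ne (Ne.symm had) (Ne.symm hbd)] at e1s
  have hstf : rename (Equiv.swap a b) (rename (Equiv.swap c d) f)
      = rename (Equiv.swap c d) (rename (Equiv.swap a b) f) := by
    rw [rename_rename, rename_rename, swap_comp_swap_of_disjoint hac had hbc hbd]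
  linear_combination -e3 + e3t + (X c - X d) * e2 + e1 - e1s - hstf

end Dem
namespace Dem
variable {σ : Type} [DecidableEq σ]

lemma swap_braid_perm {a b c : σ} (hab : a ≠ b) (hac : a ≠ c) (hbc : b ≠ c) :
    Equiv.swap a b * Equiv.swap b c * Equiv.swap a b
      = Equiv.swap b c * Equiv.swap a b * Equiv.swap b c := by
  have h1 := Equiv.swap_mul_swap_mul_swap (x := c) (y := b) (z := a)
    (Ne.symm hbc) (Ne.symm hac)
  have h2 := Equiv.swap_mul_swap_mul_swap (x := a) (y := b) (z := c) hab hac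
  rw [Equiv.swap_comm b a, Equiv.swap_comm c b] at h1
  rw [h1, h2, Equiv.swap_comm]

lemma demazure_braid {a b c : σ} (hab : a ≠ b) (hac : a ≠ c) (hbc : b ≠ c)
    (f : MvPolynomial σ ℚ) :
    demazure a b (demazure b c (demazure a b f))
      = demazure b c (demazure a b (demazure b c f)) := by
  have hA : (rename (Equiv.swap b c)) ((X a : MvPolynomial σ ℚ) - X b) = X a - X c := by
    simp only [map_sub, rename_X, Equiv.swap_apply_of_ne_of_ne hab hac,
      Equiv.swap_apply_left]
  have hB : (rename (Equiv.swap a b)) ((X b : MvPolynomial σ ℚ) - X c) = X a - X c := by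
    simp only [map_sub, rename_X, Equiv.swap_apply_right,
      Equiv.swap_apply_of_ne_of_ne (Ne.symm hac) (Ne.symm hbc)]
  have hC : (rename (Equiv.swap a b)) ((X a : MvPolynomial σ ℚ) - X c) = X b - X c := by
    simp only [map_sub, rename_X, Equiv.swap_apply_left,
      Equiv.swap_apply_of_ne_of_ne (Ne.symm hac) (Ne.symm hbc)]
  have hCt : (rename (Equiv.swap b c)) ((X a : MvPolynomial σ ℚ) - X c) = X a - X b := by
    simp only [map_sub, rename_X, Equiv.swap_apply_of_ne_of_ne hab hac,
      Equiv.swap_apply_right]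
  set g1 := demazure a b f with hg1
  set g2 := demazure b c g1 with hg2
  set g3 := demazure a b g2 with hg3
  set h1 := demazure b c f with hh1
  set h2 := demazure a b h1 with hh2
  set h3 := demazure b c h2 with hh3
  have E1 : f - rename (Equiv.swap a b) f = (X a - X b) * g1 := demazure_spec a b f
  have E2 : g1 - rename (Equiv.swap b c) g1 = (X b - X c) * g2 := demazure_spec b c g1
  have E3 : g2 - rename (Equiv.swap a b) g2 = (X a - X b) * g3 := demazure_spec a b g2
  have I1 : rename (Equiv.swap a b) g1 = g1 := rename_swap_demazure hab f
  have F1 : f - rename (Equiv.swap b c) f = (X b - X c) * h1 := demazure_spec b c f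
  have F2 : h1 - rename (Equiv.swap a b) h1 = (X a - X b) * h2 := demazure_spec a b h1
  have F3 : h2 - rename (Equiv.swap b c) h2 = (X b - X c) * h3 := demazure_spec b c h2
  have J1 : rename (Equiv.swap b c) h1 = h1 := rename_swap_demazure hbc f
  have E1t := congrArg (fun p => rename (Equiv.swap b c) p) E1
  simp only [map_sub, map_mul, hA] at E1t
  have E2s := congrArg (fun p => rename (Equiv.swap a b) p) E2
  simp only [map_sub, map_mul, hB, I1] at E2s
  have E1ts := congrArg (fun p => rename (Equiv.swap a b) p) E1t
  simp only [map_sub, map_mul, hC] at E1ts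
  have F1s := congrArg (fun p => rename (Equiv.swap a b) p) F1
  simp only [map_sub, map_mul, hB] at F1s
  have F2t := congrArg (fun p => rename (Equiv.swap b c) p) F2
  simp only [map_sub, map_mul, hA, J1] at F2t
  have F1st := congrArg (fun p => rename (Equiv.swap b c) p) F1s
  simp only [map_sub, map_mul, hCt] at F1st
  have hsts : rename (Equiv.swap a b) (rename (Equiv.swap b c) (rename (Equiv.swap a b) f))
      = rename (Equiv.swap b c) (rename (Equiv.swap a b) (rename (Equiv.swap b c) f)) := by
    simp only [rename_rename]
    rw [show (Equiv.swap a b : σ → σ) ∘ ((Equiv.swap b c : σ → σ) ∘ (Equiv.swap a b : σ → σ))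
        = ⇑(Equiv.swap a b * Equiv.swap b c * Equiv.swap a b) from rfl,
      show (Equiv.swap b c : σ → σ) ∘ ((Equiv.swap a b : σ → σ) ∘ (Equiv.swap b c : σ → σ))
        = ⇑(Equiv.swap b c * Equiv.swap a b * Equiv.swap b c) from rfl,
      swap_braid_perm hab hac hbc]
  have T1 : (X b - X c) * ((X a - X c) * ((X a - X b) * g3))
      = f - rename (Equiv.swap a b) f - rename (Equiv.swap b c) f
        + rename (Equiv.swap b c) (rename (Equiv.swap a b) f)
        + rename (Equiv.swap a b) (rename (Equiv.swap b c) f)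
        - rename (Equiv.swap a b) (rename (Equiv.swap b c) (rename (Equiv.swap a b) f)) := by
    linear_combination -((X b - X c) * (X a - X c)) * E3 - (X a - X c) * E2
      + (X b - X c) * E2s - E1 + E1t - E1ts
  have T2 : (X a - X b) * ((X a - X c) * ((X b - X c) * h3))
      = f - rename (Equiv.swap b c) f - rename (Equiv.swap a b) f
        + rename (Equiv.swap a b) (rename (Equiv.swap b c) f)
        + rename (Equiv.swap b c) (rename (Equiv.swap a b) f)
        - rename (Equiv.swap b c) (rename (Equiv.swap a b) (rename (Equiv.swap b c) f)) := by
    linear_combination -((X a - X b) * (X a - X c)) * F3 - (X a - X c) * F2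
      + (X a - X b) * F2t - F1 + F1s - F1st
  apply mul_left_cancel₀ (X_sub_X_ne_zero hab)
  apply mul_left_cancel₀ (X_sub_X_ne_zero hac)
  apply mul_left_cancel₀ (X_sub_X_ne_zero hbc)
  linear_combination T1 - T2 - hsts

end Dem
namespace Dem
variable {n : ℕ}

lemma adjSwap_eq {i : ℕ} (hi : i + 1 < n) :
    adjSwap n i = Equiv.swap ⟨i, Nat.lt_of_succ_lt hi⟩ ⟨i + 1, hi⟩ :=
  dif_pos hi

lemma adjSwap_mul_self {i : ℕ} (hi : i + 1 < n) :
    adjSwap n i * adjSwap n i = 1 := by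
  rw [adjSwap_eq hi, Equiv.swap_mul_self]

lemma swap_lt {a b : Fin n} (hab : (b : ℕ) = (a : ℕ) + 1) {x y : Fin n} (hxy : x < y) :
    Equiv.swap a b x < Equiv.swap a b y ↔ ¬(x = a ∧ y = b) := by
  simp only [Equiv.swap_apply_def]
  split_ifs <;>
    (simp only [Fin.lt_def, Fin.ext_iff, not_and] at * <;> omega)

lemma permLen_inv (w : Equiv.Perm (Fin n)) : permLen w⁻¹ = permLen w := by
  unfold permLen
  apply Finset.card_bij (fun p _ => (w⁻¹ p.2, w⁻¹ p.1))
  · intro p hp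
    simp only [Finset.mem_filter, Finset.mem_univ, true_and] at hp ⊢
    exact ⟨hp.2, by simpa only [Equiv.Perm.coe_inv, Equiv.apply_symm_apply] using hp.1⟩
  · intro p hp q hq h
    simp only [Prod.mk.injEq, EmbeddingLike.apply_eq_iff_eq] at h
    exact Prod.ext h.2 h.1
  · intro q hq
    simp only [Finset.mem_filter, Finset.mem_univ, true_and] at hq
    refine ⟨(w q.2, w q.1), ?_, ?_⟩
    · simp only [Finset.mem_filter, Finset.mem_univ, true_and]
      exact ⟨hq.2, by simpa only [Equiv.Perm.coe_inv, Equiv.symm_apply_apply] using hq.1⟩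
    · simp only [Equiv.Perm.coe_inv, Equiv.symm_apply_apply, Prod.mk.eta]

end Dem
namespace Dem
variable {n : ℕ}

/-- Left multiplication by `s_i` when `w⁻¹ i < w⁻¹ (i+1)`: length goes up. -/
lemma permLen_mul_of_lt {i : ℕ} (hi : i + 1 < n) (w : Equiv.Perm (Fin n))
    (hv : w⁻¹ ⟨i, Nat.lt_of_succ_lt hi⟩ < w⁻¹ ⟨i + 1, hi⟩) :
    permLen (adjSwap n i * w) = permLen w + 1 := by
  set a : Fin n := ⟨i, Nat.lt_of_succ_lt hi⟩ with ha
  set b : Fin n := ⟨i + 1, hi⟩ with hb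
  have hba : (b : ℕ) = (a : ℕ) + 1 := rfl
  have hab : a < b := by simp [ha, hb, Fin.lt_def]
  unfold permLen
  rw [adjSwap_eq hi]
  set s := Equiv.swap a b with hs
  set p0 : Fin n × Fin n := (w⁻¹ a, w⁻¹ b) with hp0
  have key : (Finset.univ.filter
        (fun p : Fin n × Fin n => p.1 < p.2 ∧ (s * w) p.2 < (s * w) p.1))
      = insert p0 (Finset.univ.filter
        (fun p : Fin n × Fin n => p.1 < p.2 ∧ w p.2 < w p.1)) := by
    refine Finset.ext fun p => ?_
    simp only [Finset.mem_filter]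
    simp only [Finset.mem_insert, Finset.mem_filter, Finset.mem_univ, true_and,
      Equiv.Perm.mul_apply]
    constructor
    · rintro ⟨h12, hsw⟩
      rcases lt_trichotomy (w p.2) (w p.1) with h | h | h
      · exact Or.inr ⟨h12, h⟩
      · exact absurd (w.injective h).symm (ne_of_lt h12)
      · left
        have h2 : w p.1 = a ∧ w p.2 = b := by
          by_contra hc
          exact asymm hsw ((swap_lt hba h).mpr hc)
        refine Prod.ext ?_ ?_
        · rw [hp0, ← h2.1, Equiv.Perm.coe_inv, Equiv.symm_apply_apply]
        · rw [hp0, ← h2.2, Equiv.Perm.coe_inv, Equiv.symm_apply_apply]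
    · rintro (rfl | ⟨h12, hw⟩)
      · refine ⟨hv, ?_⟩
        simp only [hp0, Equiv.Perm.coe_inv, Equiv.apply_symm_apply, hs,
          Equiv.swap_apply_left, Equiv.swap_apply_right]
        exact hab
      · refine ⟨h12, ?_⟩
        rw [swap_lt hba hw]
        rintro ⟨h1, h2⟩
        rw [← h1, ← h2] at hv
        simp only [Equiv.Perm.coe_inv, Equiv.symm_apply_apply] at hv
        exact asymm h12 hv
  rw [key, Finset.card_insert_of_notMem]
  simp only [Finset.mem_filter, Finset.mem_univ, true_and, hp0, not_and,
    Equiv.Perm.coe_inv, Equiv.apply_symm_apply]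
  intro _
  exact asymm hab

end Dem
namespace Dem
variable {n : ℕ}

/-- Left multiplication by `s_i` when `w⁻¹ (i+1) < w⁻¹ i`: length goes down. -/
lemma permLen_mul_of_gt {i : ℕ} (hi : i + 1 < n) (w : Equiv.Perm (Fin n))
    (hv : w⁻¹ ⟨i + 1, hi⟩ < w⁻¹ ⟨i, Nat.lt_of_succ_lt hi⟩) :
    permLen (adjSwap n i * w) + 1 = permLen w := by
  have hv' : (adjSwap n i * w)⁻¹ ⟨i, Nat.lt_of_succ_lt hi⟩
      < (adjSwap n i * w)⁻¹ ⟨i + 1, hi⟩ := by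
    rw [mul_inv_rev, adjSwap_eq hi]
    simp only [Equiv.Perm.mul_apply, Equiv.swap_inv, Equiv.swap_apply_left,
      Equiv.swap_apply_right]
    exact hv
  have := permLen_mul_of_lt hi (adjSwap n i * w) hv'
  rw [← mul_assoc, adjSwap_mul_self hi, one_mul] at this
  omega

/-- The two-sided criterion packaged for right multiplication. -/
lemma permLen_mul_right_of_lt {i : ℕ} (hi : i + 1 < n) (w : Equiv.Perm (Fin n))
    (hv : w ⟨i, Nat.lt_of_succ_lt hi⟩ < w ⟨i + 1, hi⟩) :
    permLen (w * adjSwap n i) = permLen w + 1 := by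
  have h1 : (w * adjSwap n i)⁻¹ = adjSwap n i * w⁻¹ := by
    rw [mul_inv_rev, adjSwap_eq hi, Equiv.swap_inv, ← adjSwap_eq hi]
  rw [← permLen_inv, h1, permLen_mul_of_lt hi w⁻¹ (by simpa using hv), permLen_inv]

lemma permLen_mul_right_of_gt {i : ℕ} (hi : i + 1 < n) (w : Equiv.Perm (Fin n))
    (hv : w ⟨i + 1, hi⟩ < w ⟨i, Nat.lt_of_succ_lt hi⟩) :
    permLen (w * adjSwap n i) + 1 = permLen w := by
  have h1 : (w * adjSwap n i)⁻¹ = adjSwap n i * w⁻¹ := by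
    rw [mul_inv_rev, adjSwap_eq hi, Equiv.swap_inv, ← adjSwap_eq hi]
  rw [← permLen_inv, h1, permLen_mul_of_gt hi w⁻¹ (by simpa using hv), permLen_inv]

end Dem
namespace Dem
variable {n : ℕ}

lemma eq_one_of_strictMono {w : Equiv.Perm (Fin n)} (hmono : StrictMono w) :
    w = 1 := by
  have h1 : (w : Fin n → Fin n) = (id : Fin n → Fin n) := by
    apply (StrictMono.range_inj hmono strictMono_id).mp
    rw [Set.range_id, Equiv.range_eq_univ]
  apply Equiv.coe_fn_injective
  exact h1

lemma eq_one_of_permLen_eq_zero {w : Equiv.Perm (Fin n)} (h : permLen w = 0) :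
    w = 1 := by
  apply eq_one_of_strictMono
  intro x y hxy
  rcases lt_trichotomy (w x) (w y) with h' | h' | h'
  · exact h'
  · exact absurd (w.injective h') (ne_of_lt hxy)
  · exfalso
    have hmem : (x, y) ∈ Finset.univ.filter
        (fun p : Fin n × Fin n => p.1 < p.2 ∧ w p.2 < w p.1) := by
      simp only [Finset.mem_filter, Finset.mem_univ, true_and]
      exact ⟨hxy, h'⟩
    rw [permLen, Finset.card_eq_zero] at h
    simp [h] at hmem

/-- A nontrivial permutation has a (right) descent. -/
lemma exists_descent {w : Equiv.Perm (Fin n)} (h : w ≠ 1) :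
    ∃ i : ℕ, ∃ hi : i + 1 < n, w ⟨i + 1, hi⟩ < w ⟨i, Nat.lt_of_succ_lt hi⟩ := by
  by_contra hc
  push_neg at hc
  apply h
  apply eq_one_of_strictMono
  cases n with
  | zero => intro x; exact absurd x.2 (by omega)
  | succ m =>
    rw [Fin.strictMono_iff_lt_succ]
    intro j
    have hj : (j : ℕ) + 1 < m + 1 := by omega
    have hle := hc j hj
    have h2 : w ⟨(j : ℕ), Nat.lt_of_succ_lt hj⟩ ≠ w ⟨(j : ℕ) + 1, hj⟩ := by
      intro hh
      have := w.injective hh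
      simp [Fin.ext_iff] at this
    have h3 := lt_of_le_of_ne hle h2
    convert h3 using 2 <;> simp [Fin.ext_iff]

end Dem
namespace Dem
variable {n : ℕ}

lemma permLen_one : permLen (1 : Equiv.Perm (Fin n)) = 0 := by
  rw [permLen, Finset.card_eq_zero]
  refine Finset.ext fun p => ?_
  simp only [Finset.mem_filter]
  simp only [Finset.mem_filter, Finset.mem_univ, true_and, Finset.notMem_empty,
    iff_false, not_and, Equiv.Perm.one_apply]
  intro h
  exact asymm h

/-- Trichotomy bound. -/
lemma permLen_mul_bounds {i : ℕ} (hi : i + 1 < n) (w : Equiv.Perm (Fin n)) :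
    permLen (adjSwap n i * w) ≤ permLen w + 1
      ∧ permLen w ≤ permLen (adjSwap n i * w) + 1 := by
  rcases lt_trichotomy (w⁻¹ ⟨i, Nat.lt_of_succ_lt hi⟩) (w⁻¹ ⟨i + 1, hi⟩) with h | h | h
  · have := permLen_mul_of_lt hi w h; omega
  · exact absurd (w⁻¹.injective h) (by simp [Fin.ext_iff])
  · have := permLen_mul_of_gt hi w h; omega

lemma permLen_le_length (l : List ℕ) (hl : ∀ i ∈ l, i + 1 < n) :
    permLen (l.map (adjSwap n)).prod ≤ l.length := by
  induction l with
  | nil => simp [permLen_one]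
  | cons i a ih =>
    simp only [List.map_cons, List.prod_cons, List.length_cons]
    have hi : i + 1 < n := hl i (by simp)
    have h1 := (permLen_mul_bounds hi (a.map (adjSwap n)).prod).1
    have h2 := ih (fun j hj => hl j (by simp [hj]))
    omega

lemma exists_reducedWord (w : Equiv.Perm (Fin n)) : ∃ l, IsReducedWord n w l := by
  generalize hr : permLen w = r
  induction r using Nat.strong_induction_on generalizing w with
  | _ r IH =>
    rcases eq_or_ne w 1 with rfl | hw
    · exact ⟨[], by simp, by simp, by simp [permLen_one]⟩
    · obtain ⟨i, hi, hd⟩ := exists_descent hw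
      have hlen := permLen_mul_right_of_gt hi w hd
      obtain ⟨l', h1, h2, h3⟩ := IH (permLen (w * adjSwap n i)) (by omega) _ rfl
      refine ⟨l' ++ [i], ?_, ?_, ?_⟩
      · intro j hj
        rcases List.mem_append.mp hj with h | h
        · exact h1 j h
        · simp at h; omega
      · rw [List.map_append, List.prod_append]
        simp only [List.map_cons, List.map_nil, List.prod_cons, List.prod_nil, mul_one]
        rw [h2, mul_assoc, adjSwap_mul_self hi, mul_one]
      · rw [List.length_append, h3]
        simp only [List.length_cons, List.length_nil]
        omega

lemma reducedWord_tail {w : Equiv.Perm (Fin n)} {i : ℕ} {a : List ℕ}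
    (h : IsReducedWord n w (i :: a)) :
    IsReducedWord n (adjSwap n i * w) a ∧ permLen (adjSwap n i * w) + 1 = permLen w := by
  obtain ⟨h1, h2, h3⟩ := h
  have hi : i + 1 < n := h1 i (by simp)
  simp only [List.map_cons, List.prod_cons] at h2
  have hprod : (a.map (adjSwap n)).prod = adjSwap n i * w := by
    rw [← h2, ← mul_assoc, adjSwap_mul_self hi, one_mul]
  have hrange : ∀ j ∈ a, j + 1 < n := fun j hj => h1 j (by simp [hj])
  have hub := permLen_le_length a hrange
  rw [hprod] at hub
  simp only [List.length_cons] at h3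
  have hlb := (permLen_mul_bounds hi w).2
  have hlen : permLen (adjSwap n i * w) = a.length := by omega
  exact ⟨⟨hrange, hprod, hlen.symm⟩, by omega⟩

/-- Left descent criterion from a length drop. -/
lemma left_descent {w : Equiv.Perm (Fin n)} {i : ℕ} (hi : i + 1 < n)
    (h : permLen (adjSwap n i * w) < permLen w) :
    w⁻¹ ⟨i + 1, hi⟩ < w⁻¹ ⟨i, Nat.lt_of_succ_lt hi⟩ := by
  rcases lt_trichotomy (w⁻¹ ⟨i, Nat.lt_of_succ_lt hi⟩) (w⁻¹ ⟨i + 1, hi⟩) with h' | h' | h'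
  · have := permLen_mul_of_lt hi w h'; omega
  · exact absurd (w⁻¹.injective h') (by simp [Fin.ext_iff])
  · exact h'

end Dem
namespace Dem
variable {n : ℕ}

lemma adjSwap_comm {i j : ℕ} (hi : i + 1 < n) (hj : j + 1 < n)
    (hij : i + 2 ≤ j ∨ j + 2 ≤ i) :
    adjSwap n i * adjSwap n j = adjSwap n j * adjSwap n i := by
  rw [adjSwap_eq hi, adjSwap_eq hj]
  ext x
  simp only [Equiv.Perm.mul_apply, Equiv.swap_apply_def]
  split_ifs <;> simp only [Fin.ext_iff, Fin.lt_def] at * <;> omega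

lemma adjSwap_braid {k : ℕ} (hk : k + 2 < n) :
    adjSwap n k * adjSwap n (k + 1) * adjSwap n k
      = adjSwap n (k + 1) * adjSwap n k * adjSwap n (k + 1) := by
  have hk1 : k + 1 < n := by omega
  have hk2 : k + 1 + 1 < n := hk
  rw [adjSwap_eq hk1, adjSwap_eq hk2]
  have hab : (⟨k, Nat.lt_of_succ_lt hk1⟩ : Fin n) ≠ ⟨k + 1, hk1⟩ := by
    simp only [ne_eq, Fin.mk.injEq]; omega
  have hac : (⟨k, Nat.lt_of_succ_lt hk1⟩ : Fin n) ≠ ⟨k + 1 + 1, hk2⟩ := by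
    simp only [ne_eq, Fin.mk.injEq]; omega
  have hbc : (⟨k + 1, hk1⟩ : Fin n) ≠ ⟨k + 1 + 1, hk2⟩ := by
    simp only [ne_eq, Fin.mk.injEq]; omega
  exact swap_braid_perm hab hac hbc

lemma demAtX_eq {i : ℕ} (hi : i + 1 < n) :
    demAtX n i = demazure (Sum.inl ⟨i, Nat.lt_of_succ_lt hi⟩) (Sum.inl ⟨i + 1, hi⟩) :=
  dif_pos hi

lemma demAtX_demAtX {i : ℕ} (hi : i + 1 < n) (f : MvPolynomial (Fin n ⊕ Fin n) ℚ) :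
    demAtX n i (demAtX n i f) = 0 := by
  rw [demAtX_eq hi]
  exact demazure_demazure (by simp [Fin.ext_iff]) f

lemma demAtX_comm {i j : ℕ} (hi : i + 1 < n) (hj : j + 1 < n)
    (hij : i + 2 ≤ j ∨ j + 2 ≤ i) (f : MvPolynomial (Fin n ⊕ Fin n) ℚ) :
    demAtX n i (demAtX n j f) = demAtX n j (demAtX n i f) := by
  rw [demAtX_eq hi, demAtX_eq hj]
  have h1 : (Sum.inl (⟨i, Nat.lt_of_succ_lt hi⟩ : Fin n) : Fin n ⊕ Fin n)
      ≠ Sum.inl ⟨i + 1, hi⟩ := by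
    simp only [ne_eq, Sum.inl.injEq, Fin.mk.injEq]; omega
  have h2 : (Sum.inl (⟨j, Nat.lt_of_succ_lt hj⟩ : Fin n) : Fin n ⊕ Fin n)
      ≠ Sum.inl ⟨j + 1, hj⟩ := by
    simp only [ne_eq, Sum.inl.injEq, Fin.mk.injEq]; omega
  have h3 : (Sum.inl (⟨i, Nat.lt_of_succ_lt hi⟩ : Fin n) : Fin n ⊕ Fin n)
      ≠ Sum.inl ⟨j, Nat.lt_of_succ_lt hj⟩ := by
    simp only [ne_eq, Sum.inl.injEq, Fin.mk.injEq]; omega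
  have h4 : (Sum.inl (⟨i, Nat.lt_of_succ_lt hi⟩ : Fin n) : Fin n ⊕ Fin n)
      ≠ Sum.inl ⟨j + 1, hj⟩ := by
    simp only [ne_eq, Sum.inl.injEq, Fin.mk.injEq]; omega
  have h5 : (Sum.inl (⟨i + 1, hi⟩ : Fin n) : Fin n ⊕ Fin n)
      ≠ Sum.inl ⟨j, Nat.lt_of_succ_lt hj⟩ := by
    simp only [ne_eq, Sum.inl.injEq, Fin.mk.injEq]; omega
  have h6 : (Sum.inl (⟨i + 1, hi⟩ : Fin n) : Fin n ⊕ Fin n)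
      ≠ Sum.inl ⟨j + 1, hj⟩ := by
    simp only [ne_eq, Sum.inl.injEq, Fin.mk.injEq]; omega
  exact demazure_comm h1 h2 h3 h4 h5 h6 f

lemma demAtX_braid {k : ℕ} (hk : k + 2 < n) (f : MvPolynomial (Fin n ⊕ Fin n) ℚ) :
    demAtX n k (demAtX n (k + 1) (demAtX n k f))
      = demAtX n (k + 1) (demAtX n k (demAtX n (k + 1) f)) := by
  have hk1 : k + 1 < n := by omega
  have hk2 : k + 1 + 1 < n := hk
  rw [demAtX_eq hk1, demAtX_eq hk2]
  have hab : (Sum.inl (⟨k, Nat.lt_of_succ_lt hk1⟩ : Fin n) : Fin n ⊕ Fin n)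
      ≠ Sum.inl ⟨k + 1, hk1⟩ := by
    simp only [ne_eq, Sum.inl.injEq, Fin.mk.injEq]; omega
  have hac : (Sum.inl (⟨k, Nat.lt_of_succ_lt hk1⟩ : Fin n) : Fin n ⊕ Fin n)
      ≠ Sum.inl ⟨k + 1 + 1, hk2⟩ := by
    simp only [ne_eq, Sum.inl.injEq, Fin.mk.injEq]; omega
  have hbc : (Sum.inl (⟨k + 1, hk1⟩ : Fin n) : Fin n ⊕ Fin n)
      ≠ Sum.inl ⟨k + 1 + 1, hk2⟩ := by
    simp only [ne_eq, Sum.inl.injEq, Fin.mk.injEq]; omega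
  exact demazure_braid hab hac hbc f

end Dem
namespace Dem
variable {n : ℕ}

lemma adjSwap_inv {i : ℕ} (hi : i + 1 < n) : (adjSwap n i)⁻¹ = adjSwap n i := by
  rw [adjSwap_eq hi, Equiv.swap_inv]

lemma adjSwap_cancel {i : ℕ} (hi : i + 1 < n) (u : Equiv.Perm (Fin n)) :
    adjSwap n i * (adjSwap n i * u) = u := by
  rw [← mul_assoc, adjSwap_mul_self hi, one_mul]

lemma adjSwap_apply_fst {i : ℕ} (hi : i + 1 < n) :
    adjSwap n i ⟨i, Nat.lt_of_succ_lt hi⟩ = ⟨i + 1, hi⟩ := by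
  rw [adjSwap_eq hi, Equiv.swap_apply_left]

lemma adjSwap_apply_snd {i : ℕ} (hi : i + 1 < n) :
    adjSwap n i ⟨i + 1, hi⟩ = ⟨i, Nat.lt_of_succ_lt hi⟩ := by
  rw [adjSwap_eq hi, Equiv.swap_apply_right]

lemma adjSwap_apply_other {i : ℕ} (hi : i + 1 < n) (x : Fin n)
    (h1 : (x : ℕ) ≠ i) (h2 : (x : ℕ) ≠ i + 1) : adjSwap n i x = x := by
  rw [adjSwap_eq hi, Equiv.swap_apply_of_ne_of_ne]
  · intro h; exact h1 (by rw [h])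
  · intro h; exact h2 (by rw [h])

lemma mul_inv_apply {i : ℕ} (hi : i + 1 < n) (w : Equiv.Perm (Fin n)) (x : Fin n) :
    (adjSwap n i * w)⁻¹ x = w⁻¹ (adjSwap n i x) := by
  rw [mul_inv_rev, adjSwap_inv hi, Equiv.Perm.mul_apply]

/-- Commuting case: two independent descents. -/
lemma dihedral2 {i j : ℕ} (hi : i + 1 < n) (hj : j + 1 < n)
    (hij : i + 2 ≤ j ∨ j + 2 ≤ i) (w : Equiv.Perm (Fin n))
    (hdi : permLen (adjSwap n i * w) < permLen w)
    (hdj : permLen (adjSwap n j * w) < permLen w) :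
    permLen (adjSwap n j * (adjSwap n i * w)) + 1 = permLen (adjSwap n i * w) := by
  apply permLen_mul_of_gt hj
  rw [mul_inv_apply hi, mul_inv_apply hi,
    adjSwap_apply_other hi ⟨j + 1, hj⟩ (by simp only [Fin.val_mk]; omega) (by simp only [Fin.val_mk]; omega),
    adjSwap_apply_other hi ⟨j, Nat.lt_of_succ_lt hj⟩ (by simp only [Fin.val_mk]; omega) (by simp only [Fin.val_mk]; omega)]
  exact left_descent hj hdj

/-- Braid case: three-step descent. -/
lemma dihedral3 {k : ℕ} (hk : k + 1 + 1 < n) (w : Equiv.Perm (Fin n))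
    (hd1 : permLen (adjSwap n k * w) < permLen w)
    (hd2 : permLen (adjSwap n (k + 1) * w) < permLen w) :
    permLen (adjSwap n k * (adjSwap n (k + 1) * (adjSwap n k * w))) + 3 = permLen w := by
  have hk1 : k + 1 < n := by omega
  have d1 := left_descent hk1 hd1
  have d2 := left_descent hk hd2
  -- d1 : w⁻¹ ⟨k+1⟩ < w⁻¹ ⟨k⟩ ; d2 : w⁻¹ ⟨k+2⟩ < w⁻¹ ⟨k+1⟩
  have s1 : permLen (adjSwap n k * w) + 1 = permLen w := permLen_mul_of_gt hk1 w d1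
  have s2 : permLen (adjSwap n (k + 1) * (adjSwap n k * w)) + 1
      = permLen (adjSwap n k * w) := by
    apply permLen_mul_of_gt hk
    rw [mul_inv_apply hk1, mul_inv_apply hk1,
      adjSwap_apply_other hk1 ⟨k + 1 + 1, hk⟩ (by simp only [Fin.val_mk]; omega) (by simp only [Fin.val_mk]; omega),
      adjSwap_apply_snd hk1]
    exact lt_trans d2 d1
  have s3 : permLen (adjSwap n k * (adjSwap n (k + 1) * (adjSwap n k * w))) + 1
      = permLen (adjSwap n (k + 1) * (adjSwap n k * w)) := by
    apply permLen_mul_of_gt hk1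
    rw [mul_inv_apply hk, mul_inv_apply hk, mul_inv_apply hk1, mul_inv_apply hk1]
    rw [show adjSwap n (k + 1) ⟨k + 1, hk1⟩
        = ⟨k + 1 + 1, hk⟩ from adjSwap_apply_fst hk]
    rw [adjSwap_apply_other hk1 ⟨k + 1 + 1, hk⟩ (by simp only [Fin.val_mk]; omega) (by simp only [Fin.val_mk]; omega)]
    rw [show adjSwap n (k + 1) ⟨k, Nat.lt_of_succ_lt hk1⟩
        = ⟨k, Nat.lt_of_succ_lt hk1⟩ from
      adjSwap_apply_other hk ⟨k, Nat.lt_of_succ_lt hk1⟩ (by simp only [Fin.val_mk]; omega) (by simp only [Fin.val_mk]; omega)]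
    rw [show adjSwap n k ⟨k, Nat.lt_of_succ_lt hk1⟩
        = ⟨k + 1, hk1⟩ from adjSwap_apply_fst hk1]
    exact d2
  omega

end Dem
namespace Dem
variable {n : ℕ}

lemma demWordX_cons (i : ℕ) (l : List ℕ) :
    demWordX n (i :: l) = demAtX n i ∘ demWordX n l := rfl

/-- Auxiliary: build a reduced word by prepending a letter. -/
lemma reducedWord_cons {u : Equiv.Perm (Fin n)} {i : ℕ} (hi : i + 1 < n)
    {c : List ℕ} (hc : IsReducedWord n u c)
    (hlen : permLen (adjSwap n i * u) = permLen u + 1) :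
    IsReducedWord n (adjSwap n i * u) (i :: c) := by
  obtain ⟨h1, h2, h3⟩ := hc
  refine ⟨?_, ?_, ?_⟩
  · intro j hj
    rcases List.mem_cons.mp hj with rfl | hj
    · exact hi
    · exact h1 j hj
  · simp only [List.map_cons, List.prod_cons, h2]
  · simp only [List.length_cons, h3, hlen]

/-- Word independence: two reduced words of the same permutation give the same
composite Demazure operator in the `x`-variables. -/
theorem demWordX_unique :
    ∀ (r : ℕ) (w : Equiv.Perm (Fin n)) (l l' : List ℕ),
      IsReducedWord n w l → IsReducedWord n w l' → permLen w = r →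
      demWordX n l = demWordX n l' := by
  intro r
  induction r using Nat.strong_induction_on with
  | _ r IH =>
  intro w l l' hl hl' hr
  rcases l with _ | ⟨i, a⟩
  · rcases l' with _ | ⟨j, b⟩
    · rfl
    · exfalso
      have h1 := hl.2.2
      have h2 := hl'.2.2
      simp only [List.length_nil, List.length_cons] at h1 h2
      omega
  rcases l' with _ | ⟨j, b⟩
  · exfalso
    have h1 := hl.2.2
    have h2 := hl'.2.2
    simp only [List.length_nil, List.length_cons] at h1 h2
    omega
  -- both words nonempty
  have hi : i + 1 < n := hl.1 i (by simp)
  have hj : j + 1 < n := hl'.1 j (by simp)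
  obtain ⟨hared, halen⟩ := reducedWord_tail hl
  obtain ⟨hbred, hblen⟩ := reducedWord_tail hl'
  have hra : permLen (adjSwap n i * w) = r - 1 := by omega
  have hrb : permLen (adjSwap n j * w) = r - 1 := by omega
  have hr1 : 1 ≤ r := by omega
  rcases eq_or_ne i j with rfl | hij
  · have e := IH (r - 1) (by omega) (adjSwap n i * w) a b hared hbred hra
    rw [demWordX_cons, demWordX_cons, e]
  · have hdi : permLen (adjSwap n i * w) < permLen w := by omega
    have hdj : permLen (adjSwap n j * w) < permLen w := by omega
    rcases (by omega : i + 2 ≤ j ∨ j + 2 ≤ i ∨ j = i + 1 ∨ i = j + 1) with hc | hc | hc | hc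
    -- two commuting cases
    · -- i + 2 ≤ j
      obtain ⟨c, hcred⟩ := exists_reducedWord (adjSwap n j * (adjSwap n i * w))
      have hvlen : permLen (adjSwap n j * (adjSwap n i * w)) + 1
          = permLen (adjSwap n i * w) := dihedral2 hi hj (Or.inl hc) w hdi hdj
      have hjc : IsReducedWord n (adjSwap n i * w) (j :: c) := by
        have := reducedWord_cons hj hcred (by rw [adjSwap_cancel hj]; omega)
        rwa [adjSwap_cancel hj] at this
      have hveq : adjSwap n j * (adjSwap n i * w) = adjSwap n i * (adjSwap n j * w) := by
        rw [← mul_assoc, ← mul_assoc, adjSwap_comm hj hi (Or.inr hc)]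
      have hvlen' : permLen (adjSwap n i * (adjSwap n j * w)) + 1
          = permLen (adjSwap n j * w) := by rw [← hveq]; omega
      have hic : IsReducedWord n (adjSwap n j * w) (i :: c) := by
        have hcred' : IsReducedWord n (adjSwap n i * (adjSwap n j * w)) c := by
          rwa [← hveq]
        have := reducedWord_cons hi hcred' (by rw [adjSwap_cancel hi]; omega)
        rwa [adjSwap_cancel hi] at this
      have ea := IH (r - 1) (by omega) (adjSwap n i * w) a (j :: c) hared hjc hra
      have eb := IH (r - 1) (by omega) (adjSwap n j * w) b (i :: c) hbred hic hrb
      rw [demWordX_cons, demWordX_cons, ea, eb, demWordX_cons, demWordX_cons]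
      funext f
      exact demAtX_comm hi hj (Or.inl hc) (demWordX n c f)
    · -- j + 2 ≤ i : symmetric
      obtain ⟨c, hcred⟩ := exists_reducedWord (adjSwap n j * (adjSwap n i * w))
      have hvlen : permLen (adjSwap n j * (adjSwap n i * w)) + 1
          = permLen (adjSwap n i * w) := dihedral2 hi hj (Or.inr hc) w hdi hdj
      have hjc : IsReducedWord n (adjSwap n i * w) (j :: c) := by
        have := reducedWord_cons hj hcred (by rw [adjSwap_cancel hj]; omega)
        rwa [adjSwap_cancel hj] at this
      have hveq : adjSwap n j * (adjSwap n i * w) = adjSwap n i * (adjSwap n j * w) := by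
        rw [← mul_assoc, ← mul_assoc, adjSwap_comm hj hi (Or.inl hc)]
      have hvlen' : permLen (adjSwap n i * (adjSwap n j * w)) + 1
          = permLen (adjSwap n j * w) := by rw [← hveq]; omega
      have hic : IsReducedWord n (adjSwap n j * w) (i :: c) := by
        have hcred' : IsReducedWord n (adjSwap n i * (adjSwap n j * w)) c := by
          rwa [← hveq]
        have := reducedWord_cons hi hcred' (by rw [adjSwap_cancel hi]; omega)
        rwa [adjSwap_cancel hi] at this
      have ea := IH (r - 1) (by omega) (adjSwap n i * w) a (j :: c) hared hjc hra
      have eb := IH (r - 1) (by omega) (adjSwap n j * w) b (i :: c) hbred hic hrb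
      rw [demWordX_cons, demWordX_cons, ea, eb, demWordX_cons, demWordX_cons]
      funext f
      exact demAtX_comm hi hj (Or.inr hc) (demWordX n c f)
    · -- j = i + 1 (braid case, k = i)
      subst hc
      have hk : i + 1 + 1 < n := hj
      set v := adjSwap n i * (adjSwap n (i + 1) * (adjSwap n i * w)) with hv
      have hv3 : permLen v + 3 = permLen w := dihedral3 hk w hdi hdj
      obtain ⟨c, hcred⟩ := exists_reducedWord v
      have hvlen : permLen v = r - 3 := by omega
      have hveq2 : v = adjSwap n (i + 1) * (adjSwap n i * (adjSwap n (i + 1) * w)) := by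
        rw [hv]
        simp only [← mul_assoc]
        rw [adjSwap_braid hk]
      have sA1 : adjSwap n i * v = adjSwap n (i + 1) * (adjSwap n i * w) := by
        rw [hv, adjSwap_cancel hi]
      have sA2 : adjSwap n (i + 1) * (adjSwap n i * v) = adjSwap n i * w := by
        rw [sA1, adjSwap_cancel hk]
      have lenA1 : permLen (adjSwap n i * v) = r - 2 := by
        have hub := (permLen_mul_bounds hi v).1
        have hlb := (permLen_mul_bounds hk (adjSwap n i * v)).1
        rw [sA2] at hlb
        omega
      have sB1 : adjSwap n (i + 1) * v = adjSwap n i * (adjSwap n (i + 1) * w) := by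
        rw [hveq2, adjSwap_cancel hk]
      have sB2 : adjSwap n i * (adjSwap n (i + 1) * v) = adjSwap n (i + 1) * w := by
        rw [sB1, adjSwap_cancel hi]
      have lenB1 : permLen (adjSwap n (i + 1) * v) = r - 2 := by
        have hub := (permLen_mul_bounds hk v).1
        have hlb := (permLen_mul_bounds hi (adjSwap n (i + 1) * v)).1
        rw [sB2] at hlb
        omega
      have hic : IsReducedWord n (adjSwap n i * v) (i :: c) :=
        reducedWord_cons hi hcred (by omega)
      have hi1c : IsReducedWord n (adjSwap n i * w) ((i + 1) :: i :: c) := by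
        have := reducedWord_cons hk hic (by rw [sA2]; omega)
        rwa [sA2] at this
      have hjc : IsReducedWord n (adjSwap n (i + 1) * v) ((i + 1) :: c) :=
        reducedWord_cons hk hcred (by omega)
      have hj1c : IsReducedWord n (adjSwap n (i + 1) * w) (i :: (i + 1) :: c) := by
        have := reducedWord_cons hi hjc (by rw [sB2]; omega)
        rwa [sB2] at this
      have ea := IH (r - 1) (by omega) (adjSwap n i * w) a ((i + 1) :: i :: c) hared hi1c hra
      have eb := IH (r - 1) (by omega) (adjSwap n (i + 1) * w) b (i :: (i + 1) :: c)
        hbred hj1c hrb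
      rw [demWordX_cons, demWordX_cons, ea, eb, demWordX_cons, demWordX_cons,
        demWordX_cons, demWordX_cons]
      funext f
      exact demAtX_braid hk (demWordX n c f)
    · -- i = j + 1 (braid case, k = j)
      subst hc
      have hk : j + 1 + 1 < n := hi
      set v := adjSwap n j * (adjSwap n (j + 1) * (adjSwap n j * w)) with hv
      have hv3 : permLen v + 3 = permLen w := dihedral3 hk w hdj hdi
      obtain ⟨c, hcred⟩ := exists_reducedWord v
      have hvlen : permLen v = r - 3 := by omega
      have hveq2 : v = adjSwap n (j + 1) * (adjSwap n j * (adjSwap n (j + 1) * w)) := by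
        rw [hv]
        simp only [← mul_assoc]
        rw [adjSwap_braid hk]
      have sA1 : adjSwap n j * v = adjSwap n (j + 1) * (adjSwap n j * w) := by
        rw [hv, adjSwap_cancel hj]
      have sA2 : adjSwap n (j + 1) * (adjSwap n j * v) = adjSwap n j * w := by
        rw [sA1, adjSwap_cancel hk]
      have lenA1 : permLen (adjSwap n j * v) = r - 2 := by
        have hub := (permLen_mul_bounds hj v).1
        have hlb := (permLen_mul_bounds hk (adjSwap n j * v)).1
        rw [sA2] at hlb
        omega
      have sB1 : adjSwap n (j + 1) * v = adjSwap n j * (adjSwap n (j + 1) * w) := by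
        rw [hveq2, adjSwap_cancel hk]
      have sB2 : adjSwap n j * (adjSwap n (j + 1) * v) = adjSwap n (j + 1) * w := by
        rw [sB1, adjSwap_cancel hj]
      have lenB1 : permLen (adjSwap n (j + 1) * v) = r - 2 := by
        have hub := (permLen_mul_bounds hk v).1
        have hlb := (permLen_mul_bounds hj (adjSwap n (j + 1) * v)).1
        rw [sB2] at hlb
        omega
      have hjc : IsReducedWord n (adjSwap n j * v) (j :: c) :=
        reducedWord_cons hj hcred (by omega)
      have hj1c : IsReducedWord n (adjSwap n j * w) ((j + 1) :: j :: c) := by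
        have := reducedWord_cons hk hjc (by rw [sA2]; omega)
        rwa [sA2] at this
      have hic : IsReducedWord n (adjSwap n (j + 1) * v) ((j + 1) :: c) :=
        reducedWord_cons hk hcred (by omega)
      have hi1c : IsReducedWord n (adjSwap n (j + 1) * w) (j :: (j + 1) :: c) := by
        have := reducedWord_cons hj hic (by rw [sB2]; omega)
        rwa [sB2] at this
      have ea := IH (r - 1) (by omega) (adjSwap n (j + 1) * w) a (j :: (j + 1) :: c)
        hared hi1c hra
      have eb := IH (r - 1) (by omega) (adjSwap n j * w) b ((j + 1) :: j :: c) hbred hj1c hrb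
      rw [demWordX_cons, demWordX_cons, ea, eb, demWordX_cons, demWordX_cons,
        demWordX_cons, demWordX_cons]
      funext f
      exact (demAtX_braid hk (demWordX n c f)).symm

end Dem
namespace Dem
variable {n : ℕ}

lemma demazureOfX_eq_demWordX {w : Equiv.Perm (Fin n)} {l : List ℕ}
    (hl : IsReducedWord n w l) : demazureOfX n w = demWordX n l := by
  have h : ∃ l, IsReducedWord n w l := ⟨l, hl⟩
  rw [demazureOfX, dif_pos h]
  exact demWordX_unique (permLen w) w h.choose l h.choose_spec hl rfl

lemma w0_inv : (w0 n)⁻¹ = w0 n := rfl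

lemma u_inv_apply (w : Equiv.Perm (Fin n)) (x : Fin n) :
    (w⁻¹ * w0 n)⁻¹ x = (w x).rev := by
  rw [mul_inv_rev, w0_inv, inv_inv, Equiv.Perm.mul_apply]
  rfl

end Dem

theorem demazure_schubert' (n : ℕ) (w : Equiv.Perm (Fin n))
    (i : ℕ) (hi : i + 1 < n) :
    (permLen (w * adjSwap n i) + 1 = permLen w →
      demAtX n i (schubert n w) = schubert n (w * adjSwap n i)) ∧
    (permLen (w * adjSwap n i) = permLen w + 1 →
      demAtX n i (schubert n w) = 0) := by
  set u := w⁻¹ * w0 n with hu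
  obtain ⟨l, hl⟩ := Dem.exists_reducedWord u
  have hsch : schubert n w = demWordX n l (schubProd n) := by
    rw [schubert, Dem.demazureOfX_eq_demWordX hl]
  constructor
  · intro hdrop
    -- w has a descent at i
    have hd : w ⟨i + 1, hi⟩ < w ⟨i, Nat.lt_of_succ_lt hi⟩ := by
      rcases lt_trichotomy (w ⟨i, Nat.lt_of_succ_lt hi⟩) (w ⟨i + 1, hi⟩) with h | h | h
      · have := Dem.permLen_mul_right_of_lt hi w h
        omega
      · exact absurd (w.injective h) (by simp [Fin.ext_iff])
      · exact h
    -- hence u ascends at i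
    have hua : u⁻¹ ⟨i, Nat.lt_of_succ_lt hi⟩ < u⁻¹ ⟨i + 1, hi⟩ := by
      rw [hu, Dem.u_inv_apply, Dem.u_inv_apply]
      exact Fin.rev_lt_rev.mpr hd
    have hlen : permLen (adjSwap n i * u) = permLen u + 1 :=
      Dem.permLen_mul_of_lt hi u hua
    have hcons : IsReducedWord n (adjSwap n i * u) (i :: l) :=
      Dem.reducedWord_cons hi hl hlen
    have htarget : (w * adjSwap n i)⁻¹ * w0 n = adjSwap n i * u := by
      rw [mul_inv_rev, Dem.adjSwap_inv hi, hu, mul_assoc]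
    rw [hsch, schubert, htarget, Dem.demazureOfX_eq_demWordX hcons]
    rfl
  · intro hraise
    have hd : w ⟨i, Nat.lt_of_succ_lt hi⟩ < w ⟨i + 1, hi⟩ := by
      rcases lt_trichotomy (w ⟨i, Nat.lt_of_succ_lt hi⟩) (w ⟨i + 1, hi⟩) with h | h | h
      · exact h
      · exact absurd (w.injective h) (by simp [Fin.ext_iff])
      · have := Dem.permLen_mul_right_of_gt hi w h
        omega
    have hud : u⁻¹ ⟨i + 1, hi⟩ < u⁻¹ ⟨i, Nat.lt_of_succ_lt hi⟩ := by
      rw [hu, Dem.u_inv_apply, Dem.u_inv_apply]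
      exact Fin.rev_lt_rev.mpr hd
    have hlen : permLen (adjSwap n i * u) + 1 = permLen u :=
      Dem.permLen_mul_of_gt hi u hud
    obtain ⟨c, hc⟩ := Dem.exists_reducedWord (adjSwap n i * u)
    have hcons : IsReducedWord n u (i :: c) := by
      have := Dem.reducedWord_cons hi hc (by rw [Dem.adjSwap_cancel hi]; omega)
      rwa [Dem.adjSwap_cancel hi] at this
    rw [schubert, ← hu, Dem.demazureOfX_eq_demWordX hcons, Dem.demWordX_cons]
    exact Dem.demAtX_demAtX hi _
/-- The Demazure operators act on double Schubert polynomials by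
`∂ᵢˣ 𝔖_w = 𝔖_{w sᵢ}` if `ℓ(w sᵢ) = ℓ(w) - 1`, and `∂ᵢˣ 𝔖_w = 0` if `ℓ(w sᵢ) = ℓ(w) + 1`. -/
theorem demazure_schubert (n : ℕ) (hn : 1 ≤ n) (w : Equiv.Perm (Fin n))
    (i : ℕ) (hi : i + 1 < n) :
    (permLen (w * adjSwap n i) + 1 = permLen w →
      demAtX n i (schubert n w) = schubert n (w * adjSwap n i)) ∧
    (permLen (w * adjSwap n i) = permLen w + 1 →
      demAtX n i (schubert n w) = 0) := by
  exact demazure_schubert' n w i hi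
end

section
/- Let n ≥ 1 and w ∈ S_n. Substituting t_i := x_i for every i in the double Schubert polynomial 𝔖_w(x,t) gives 𝔖_w(x,x) = 1 if w is the identity permutation, and 𝔖_w(x,x) = 0 otherwise. -/
open MvPolynomial
open scoped Classical

section Dem
variable {σ : Type} [DecidableEq σ]

lemma demazure_dvd (i j : σ) (hij : i ≠ j) (f : MvPolynomial σ ℚ) :
    ∃ g, f - rename (Equiv.swap i j) f = (X i - X j) * g := by
  induction f using MvPolynomial.induction_on with
  | C a => exact ⟨0, by simp⟩
  | add p q hp hq =>
    obtain ⟨g₁, h₁⟩ := hp; obtain ⟨g₂, h₂⟩ := hq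
    exact ⟨g₁ + g₂, by rw [map_add]; linear_combination h₁ + h₂⟩
  | mul_X p k hp =>
    obtain ⟨g, hg⟩ := hp
    rcases eq_or_ne k i with rfl | hki
    · refine ⟨g * X k + rename (Equiv.swap k j) p, ?_⟩
      rw [map_mul, rename_X, Equiv.swap_apply_left]
      linear_combination X k * hg
    rcases eq_or_ne k j with rfl | hkj
    · refine ⟨g * X k - rename (Equiv.swap i k) p, ?_⟩
      rw [map_mul, rename_X, Equiv.swap_apply_right]
      linear_combination X k * hg
    · refine ⟨g * X k, ?_⟩
      rw [map_mul, rename_X, Equiv.swap_apply_of_ne_of_ne hki hkj]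
      linear_combination X k * hg

lemma demazure_spec (i j : σ) (hij : i ≠ j) (f : MvPolynomial σ ℚ) :
    (X i - X j) * demazure i j f = f - rename (Equiv.swap i j) f := by
  rw [demazure, dif_pos (demazure_dvd i j hij f)]
  exact ((demazure_dvd i j hij f).choose_spec).symm

end Dem
/-- Evaluation `xᵢ ↦ t_{v i}`, `tⱼ ↦ tⱼ`. -/
noncomputable def eps (n : ℕ) (v : Equiv.Perm (Fin n)) :
    MvPolynomial (Fin n ⊕ Fin n) ℚ → MvPolynomial (Fin n) ℚ :=
  rename (Sum.elim (fun i => v i) id)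

lemma eps_demAtX (n : ℕ) (i : ℕ) (h : i + 1 < n) (v : Equiv.Perm (Fin n))
    (f : MvPolynomial (Fin n ⊕ Fin n) ℚ) :
    (X (v ⟨i, Nat.lt_of_succ_lt h⟩) - X (v ⟨i+1, h⟩)) *
        eps n v (demAtX n i f) =
      eps n v f - eps n (v * Equiv.swap ⟨i, Nat.lt_of_succ_lt h⟩ ⟨i+1, h⟩) f := by
  set a : Fin n := ⟨i, Nat.lt_of_succ_lt h⟩
  set b : Fin n := ⟨i+1, h⟩
  have hab : a ≠ b := by
    simp only [a, b, ne_eq, Fin.mk.injEq]; omega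
  have hinl : (Sum.inl a : Fin n ⊕ Fin n) ≠ Sum.inl b := fun hc => hab (Sum.inl.inj hc)
  have hd : demAtX n i f = demazure (Sum.inl a) (Sum.inl b) f := by
    rw [demAtX, dif_pos h]
  rw [hd]
  have := congrArg (rename (Sum.elim (fun k => v k) id : Fin n ⊕ Fin n → Fin n))
    (demazure_spec (Sum.inl a) (Sum.inl b) hinl f)
  rw [map_mul, map_sub, map_sub, rename_X, rename_X] at this
  simp only [Sum.elim_inl] at this
  simp only [eps]
  have hfun : (Sum.elim (fun k => v k) id ∘ ⇑(Equiv.swap (Sum.inl a) (Sum.inl b)) :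
      Fin n ⊕ Fin n → Fin n) = Sum.elim (fun k => (v * Equiv.swap a b) k) id := by
    funext x
    cases x with
    | inl k =>
      simp only [Function.comp_apply]
      rw [Function.Injective.swap_apply Sum.inl_injective]
      simp [Equiv.Perm.mul_apply]
    | inr k =>
      simp only [Function.comp_apply]
      rw [Equiv.swap_apply_of_ne_of_ne (by simp) (by simp)]
      simp
  rw [this, rename_rename, hfun]
/-- The inversion set of a permutation. -/
def invSet {n : ℕ} (w : Equiv.Perm (Fin n)) : Finset (Fin n × Fin n) :=
  Finset.univ.filter (fun p : Fin n × Fin n => p.1 < p.2 ∧ w p.2 < w p.1)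

lemma permLen_eq_card {n : ℕ} (w : Equiv.Perm (Fin n)) : permLen w = (invSet w).card := rfl

/-- The product of `X (w p) - X (w q)` over inversions of `w`. -/
noncomputable def cc {n : ℕ} (w : Equiv.Perm (Fin n)) : MvPolynomial (Fin n) ℚ :=
  ∏ p ∈ invSet w, (X (w p.1) - X (w p.2))

lemma mem_invSet {n : ℕ} {w : Equiv.Perm (Fin n)} {p : Fin n × Fin n} :
    p ∈ invSet w ↔ p.1 < p.2 ∧ w p.2 < w p.1 := by
  simp [invSet]

lemma swap_val {n : ℕ} {a b : Fin n} (hab : (a:ℕ)+1 = (b:ℕ)) (x : Fin n) :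
    ((Equiv.swap a b x : Fin n) : ℕ) =
      if (x:ℕ) = (a:ℕ) then (b:ℕ) else if (x:ℕ) = (b:ℕ) then (a:ℕ) else (x:ℕ) := by
  rcases eq_or_ne x a with h | h
  · subst h; rw [Equiv.swap_apply_left, if_pos rfl]
  · rcases eq_or_ne x b with h2 | h2
    · subst h2
      rw [Equiv.swap_apply_right, if_neg (by omega), if_pos rfl]
    · rw [Equiv.swap_apply_of_ne_of_ne h h2,
        if_neg (fun hc => h (Fin.ext hc)), if_neg (fun hc => h2 (Fin.ext hc))]

lemma swap_lt {n : ℕ} {a b p q : Fin n} (hab : (a:ℕ)+1 = (b:ℕ)) (hpq : p < q)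
    (hne : ¬(p = a ∧ q = b)) : Equiv.swap a b p < Equiv.swap a b q := by
  have h1 : (p:ℕ) < q := hpq
  have h2 : ¬((p:ℕ) = (a:ℕ) ∧ (q:ℕ) = (b:ℕ)) := by
    rintro ⟨h3, h4⟩; exact hne ⟨Fin.ext h3, Fin.ext h4⟩
  rw [Fin.lt_def, swap_val hab, swap_val hab]
  rcases not_and_or.1 h2 with hx | hx <;> split_ifs <;> omega

lemma invSet_mul_swap {n : ℕ} {a b : Fin n} (hab : (a:ℕ)+1 = (b:ℕ))
    (w : Equiv.Perm (Fin n)) (hd : w b < w a) :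
    invSet (w * Equiv.swap a b) =
      (invSet w \ {(a, b)}).image
        (fun p : Fin n × Fin n => (Equiv.swap a b p.1, Equiv.swap a b p.2)) := by
  have hab' : a < b := by rw [Fin.lt_def]; omega
  ext ⟨p, q⟩
  simp only [Finset.mem_image, Finset.mem_sdiff, Finset.mem_singleton, mem_invSet,
    Equiv.Perm.mul_apply]
  constructor
  · rintro ⟨hpq, hinv⟩
    refine ⟨(Equiv.swap a b p, Equiv.swap a b q), ⟨⟨?_, ?_⟩, ?_⟩, by simp⟩
    · apply swap_lt hab hpq
      rintro ⟨rfl, rfl⟩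
      rw [Equiv.swap_apply_left, Equiv.swap_apply_right] at hinv
      exact absurd hinv (not_lt.2 hd.le)
    · simpa using hinv
    · intro hc
      have hc1 : Equiv.swap a b p = a := congrArg Prod.fst hc
      have hc2 : Equiv.swap a b q = b := congrArg Prod.snd hc
      have hpb : p = b := by
        have := congrArg (Equiv.swap a b) hc1
        simpa [Equiv.swap_apply_left] using this
      have hqa : q = a := by
        have := congrArg (Equiv.swap a b) hc2
        simpa [Equiv.swap_apply_right] using this
      subst hpb; subst hqa
      exact absurd hpq (not_lt.2 hab'.le)
  · rintro ⟨⟨p', q'⟩, ⟨⟨h1, h2⟩, h3⟩, heq⟩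
    injection heq with e1 e2
    subst e1; subst e2
    refine ⟨?_, by simpa using h2⟩
    apply swap_lt hab h1
    rintro ⟨rfl, rfl⟩
    exact h3 rfl

lemma swap_pair_injective {n : ℕ} (a b : Fin n) :
    Function.Injective (fun p : Fin n × Fin n => (Equiv.swap a b p.1, Equiv.swap a b p.2)) := by
  rintro ⟨p, q⟩ ⟨p', q'⟩ h
  simp only [Prod.mk.injEq] at h
  exact Prod.ext ((Equiv.swap a b).injective h.1) ((Equiv.swap a b).injective h.2)

lemma permLen_mul_swap_descent {n : ℕ} {a b : Fin n} (hab : (a:ℕ)+1 = (b:ℕ))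
    {w : Equiv.Perm (Fin n)} (hd : w b < w a) :
    permLen (w * Equiv.swap a b) + 1 = permLen w := by
  have hab' : a < b := by rw [Fin.lt_def]; omega
  have hmem : (a, b) ∈ invSet w := mem_invSet.2 ⟨hab', hd⟩
  rw [permLen_eq_card, permLen_eq_card, invSet_mul_swap hab w hd,
    Finset.card_image_of_injective _ (swap_pair_injective a b),
    Finset.card_sdiff_of_subset (by simpa using hmem)]
  have : 1 ≤ (invSet w).card := Finset.card_pos.2 ⟨_, hmem⟩
  simp; omega

lemma cc_mul_swap_descent {n : ℕ} {a b : Fin n} (hab : (a:ℕ)+1 = (b:ℕ))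
    {w : Equiv.Perm (Fin n)} (hd : w b < w a) :
    cc (w * Equiv.swap a b) * (X (w a) - X (w b)) = cc w := by
  have hab' : a < b := by rw [Fin.lt_def]; omega
  have hmem : (a, b) ∈ invSet w := mem_invSet.2 ⟨hab', hd⟩
  rw [cc, invSet_mul_swap hab w hd,
    Finset.prod_image (fun x _ y _ h => swap_pair_injective a b h)]
  have h1 : ∀ p ∈ invSet w \ {(a, b)},
      (X ((w * Equiv.swap a b) (Equiv.swap a b p.1)) -
        X ((w * Equiv.swap a b) (Equiv.swap a b p.2)) : MvPolynomial (Fin n) ℚ) =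
      X (w p.1) - X (w p.2) := by
    intro p _
    simp [Equiv.Perm.mul_apply]
  rw [Finset.prod_congr rfl h1, cc,
    Finset.prod_eq_prod_diff_singleton_mul hmem
      (fun p : Fin n × Fin n => (X (w p.1) - X (w p.2) : MvPolynomial (Fin n) ℚ))]

lemma permLen_mul_swap_ascent {n : ℕ} {a b : Fin n} (hab : (a:ℕ)+1 = (b:ℕ))
    {w : Equiv.Perm (Fin n)} (hd : w a < w b) :
    permLen (w * Equiv.swap a b) = permLen w + 1 := by
  have hd' : (w * Equiv.swap a b) b < (w * Equiv.swap a b) a := by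
    simpa [Equiv.Perm.mul_apply] using hd
  have h2 := permLen_mul_swap_descent hab hd'
  rw [mul_assoc, Equiv.swap_mul_self, mul_one] at h2
  omega
lemma permLen_inv {n : ℕ} (u : Equiv.Perm (Fin n)) : permLen u⁻¹ = permLen u := by
  rw [permLen_eq_card, permLen_eq_card]
  apply Finset.card_bij' (fun p _ => (u⁻¹ p.2, u⁻¹ p.1)) (fun p _ => (u p.2, u p.1))
  · rintro ⟨p, q⟩ h
    rw [mem_invSet] at h ⊢
    simp only at *
    exact ⟨h.2, by simpa using h.1⟩
  · rintro ⟨p, q⟩ h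
    rw [mem_invSet] at h ⊢
    simp only at *
    exact ⟨h.2, by simpa using h.1⟩
  · rintro ⟨p, q⟩ h; simp
  · rintro ⟨p, q⟩ h; simp

lemma permLen_mul_w0 {n : ℕ} (z : Equiv.Perm (Fin n)) :
    permLen (z * w0 n) + permLen z = permLen (w0 n) := by
  classical
  have key : invSet z = (Finset.univ.filter (fun p : Fin n × Fin n => p.1 < p.2)).filter
      (fun p => z p.2 < z p.1) := by
    ext p; simp [invSet, and_assoc]
  have key2 : invSet (z * w0 n) =
      ((Finset.univ.filter (fun p : Fin n × Fin n => p.1 < p.2)).filter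
        (fun p => ¬ z p.2 < z p.1)).image (fun p : Fin n × Fin n => (Fin.rev p.2, Fin.rev p.1)) := by
    ext ⟨p, q⟩
    simp only [Finset.mem_image, Finset.mem_filter, Finset.mem_univ, true_and, mem_invSet,
      Equiv.Perm.mul_apply, w0, Fin.revPerm_apply]
    constructor
    · rintro ⟨hpq, hinv⟩
      exact ⟨(Fin.rev q, Fin.rev p), ⟨by simpa using hpq, lt_asymm hinv⟩, by simp⟩
    · rintro ⟨⟨p', q'⟩, ⟨h1, h2⟩, heq⟩
      injection heq with e1 e2
      subst e1; subst e2
      refine ⟨by simpa using h1, ?_⟩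
      simp only [Fin.rev_rev]
      rcases lt_or_ge (z p') (z q') with h | h
      · exact h
      · exact absurd (h.lt_of_ne (fun hc => (ne_of_lt h1) (z.injective hc).symm)) h2
  have hinj : Function.Injective (fun p : Fin n × Fin n => (Fin.rev p.2, Fin.rev p.1)) := by
    rintro ⟨p, q⟩ ⟨p', q'⟩ h
    simp only [Prod.mk.injEq] at h
    exact Prod.ext (Fin.rev_injective h.2) (Fin.rev_injective h.1)
  have hw0 : invSet (w0 n) = Finset.univ.filter (fun p : Fin n × Fin n => p.1 < p.2) := by
    ext p; simp [invSet, w0]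
  rw [permLen_eq_card, permLen_eq_card, permLen_eq_card, key2,
    Finset.card_image_of_injective _ hinj, key, hw0]
  rw [add_comm]
  exact Finset.card_filter_add_card_filter_not _

lemma permLen_one {n : ℕ} : permLen (1 : Equiv.Perm (Fin n)) = 0 := by
  rw [permLen_eq_card, Finset.card_eq_zero]
  ext p
  simp only [mem_invSet, Equiv.Perm.one_apply, Finset.notMem_empty, iff_false]
  rintro ⟨h1, h2⟩
  exact absurd h1 (not_lt.2 h2.le)

lemma perm_eq_one_of_le {n : ℕ} (u : Equiv.Perm (Fin n))
    (h : ∀ k : Fin n, (k : ℕ) ≤ (u k : ℕ)) : u = 1 := by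
  have hsum : ∑ k : Fin n, ((u k : ℕ)) = ∑ k : Fin n, (k : ℕ) :=
    Equiv.sum_comp u (fun k => (k : ℕ))
  have := (Finset.sum_eq_sum_iff_of_le (fun i _ => h i)).1 hsum.symm
  ext k
  have hk := this k (Finset.mem_univ k)
  simp only [Equiv.Perm.one_apply]
  exact hk.symm

lemma perm_eq_one_of_adj_ascent {n : ℕ} (u : Equiv.Perm (Fin n))
    (h : ∀ i : ℕ, ∀ hi : i + 1 < n, u ⟨i, Nat.lt_of_succ_lt hi⟩ < u ⟨i+1, hi⟩) : u = 1 := by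
  apply perm_eq_one_of_le
  have key : ∀ m : ℕ, ∀ hm : m < n, m ≤ (u ⟨m, hm⟩ : ℕ) := by
    intro m
    induction m with
    | zero => intro _; exact Nat.zero_le _
    | succ m ih =>
      intro hm
      have h1 := ih (Nat.lt_of_succ_lt hm)
      have h2 := h m hm
      rw [Fin.lt_def] at h2
      omega
  intro k
  have := key k k.isLt
  simpa using this

lemma exists_descent {n : ℕ} (u : Equiv.Perm (Fin n)) (hu : u ≠ 1) :
    ∃ i : ℕ, ∃ hi : i + 1 < n, u ⟨i+1, hi⟩ < u ⟨i, Nat.lt_of_succ_lt hi⟩ := by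
  by_contra hc
  push_neg at hc
  apply hu
  apply perm_eq_one_of_adj_ascent
  intro i hi
  have h1 := hc i hi
  have hne : u ⟨i, Nat.lt_of_succ_lt hi⟩ ≠ u ⟨i+1, hi⟩ := by
    intro hcc
    have := u.injective hcc
    simp [Fin.ext_iff] at this
  exact lt_of_le_of_ne h1 hne

lemma permLen_eq_zero {n : ℕ} (u : Equiv.Perm (Fin n)) (h : permLen u = 0) : u = 1 := by
  by_contra hu
  obtain ⟨i, hi, hd⟩ := exists_descent u hu
  have hmem : (⟨i, Nat.lt_of_succ_lt hi⟩, ⟨i+1, hi⟩) ∈ invSet u :=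
    mem_invSet.2 ⟨by rw [Fin.lt_def]; simp, hd⟩
  rw [permLen_eq_card, Finset.card_eq_zero] at h
  rw [h] at hmem
  exact absurd hmem (Finset.notMem_empty _)

lemma adjSwap_inv {n : ℕ} (i : ℕ) : (adjSwap n i)⁻¹ = adjSwap n i := by
  rw [adjSwap]
  split_ifs
  · exact Equiv.swap_inv _ _
  · rfl

lemma permLen_mul_adjSwap_le {n : ℕ} (u : Equiv.Perm (Fin n)) (i : ℕ) :
    permLen (u * adjSwap n i) ≤ permLen u + 1 := by
  rw [adjSwap]
  split_ifs with h
  · set a : Fin n := ⟨i, Nat.lt_of_succ_lt h⟩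
    set b : Fin n := ⟨i+1, h⟩
    have hab : (a:ℕ)+1 = (b:ℕ) := rfl
    rcases lt_or_ge (u a) (u b) with hlt | hle
    · rw [permLen_mul_swap_ascent hab hlt]
    · have hne : u b ≠ u a := by
        intro hc
        have := u.injective hc
        simp [a, b, Fin.ext_iff] at this
      have hd : u b < u a := lt_of_le_of_ne hle hne
      have := permLen_mul_swap_descent hab hd
      omega
  · simp

lemma permLen_adjSwap_mul_le {n : ℕ} (u : Equiv.Perm (Fin n)) (i : ℕ) :
    permLen (adjSwap n i * u) ≤ permLen u + 1 := by
  have h1 : permLen (adjSwap n i * u) = permLen (u⁻¹ * adjSwap n i) := by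
    rw [← permLen_inv (adjSwap n i * u), mul_inv_rev, adjSwap_inv]
  rw [h1]
  calc permLen (u⁻¹ * adjSwap n i) ≤ permLen u⁻¹ + 1 := permLen_mul_adjSwap_le _ _
  _ = permLen u + 1 := by rw [permLen_inv]
lemma w0_inv {n : ℕ} : (w0 n)⁻¹ = w0 n := by
  apply Equiv.ext; intro x
  simp [w0, Equiv.Perm.inv_def]

lemma adjSwap_mul_self {n : ℕ} (i : ℕ) : adjSwap n i * adjSwap n i = 1 := by
  rw [adjSwap]
  split_ifs
  · exact Equiv.swap_mul_self _ _
  · simp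

lemma exists_reduced {n : ℕ} (w : Equiv.Perm (Fin n)) : ∃ l, IsReducedWord n w l := by
  generalize hN : permLen w = N
  induction N using Nat.strong_induction_on generalizing w with
  | _ N ih =>
    rcases eq_or_ne w 1 with rfl | hw
    · exact ⟨[], fun i h => absurd h List.not_mem_nil, by simp, by simp [permLen_one]⟩
    · obtain ⟨i, hi, hd⟩ := exists_descent w hw
      have hsw : adjSwap n i = Equiv.swap ⟨i, Nat.lt_of_succ_lt hi⟩ ⟨i+1, hi⟩ := by
        rw [adjSwap, dif_pos hi]
      have hlen : permLen (w * adjSwap n i) + 1 = permLen w := by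
        rw [hsw]; exact permLen_mul_swap_descent rfl hd
      obtain ⟨l', hr, hp, hl⟩ := ih (permLen (w * adjSwap n i)) (by omega) (w * adjSwap n i) rfl
      refine ⟨l' ++ [i], ?_, ?_, ?_⟩
      · intro j hj
        rcases List.mem_append.1 hj with h | h
        · exact hr j h
        · simp only [List.mem_singleton] at h; subst h; exact hi
      · rw [List.map_append, List.prod_append, hp]
        simp [mul_assoc, adjSwap_mul_self]
      · simp only [List.length_append, List.length_singleton, hl]
        omega

lemma permLen_prod_le {n : ℕ} (l : List ℕ) :
    permLen ((l.map (adjSwap n)).prod) ≤ l.length := by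
  induction l with
  | nil => simp [permLen_one]
  | cons i s ih =>
    rw [List.map_cons, List.prod_cons]
    calc permLen (adjSwap n i * (s.map (adjSwap n)).prod)
        ≤ permLen ((s.map (adjSwap n)).prod) + 1 := permLen_adjSwap_mul_le _ _
      _ ≤ s.length + 1 := by omega
      _ = (i :: s).length := by simp

lemma reduced_tail {n : ℕ} (i : ℕ) (s : List ℕ)
    (h : permLen (((i :: s).map (adjSwap n)).prod) = (i :: s).length) :
    permLen ((s.map (adjSwap n)).prod) = s.length := by
  have h1 := permLen_prod_le (n := n) s
  have h2 := permLen_adjSwap_mul_le ((s.map (adjSwap n)).prod) i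
  have h3 := permLen_adjSwap_mul_le ((s.map (adjSwap n)).prod) i
  rw [List.map_cons, List.prod_cons] at h
  have h4 : permLen (adjSwap n i * (s.map (adjSwap n)).prod) ≤
      permLen ((s.map (adjSwap n)).prod) + 1 := permLen_adjSwap_mul_le _ _
  simp only [List.length_cons] at h
  omega

lemma exists_small {n : ℕ} (v : Equiv.Perm (Fin n)) (hv : v ≠ w0 n) :
    ∃ i : Fin n, (i:ℕ) + ((v i : Fin n):ℕ) + 2 ≤ n := by
  by_contra hc
  push_neg at hc
  apply hv
  have h1 : v * w0 n = 1 := by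
    apply perm_eq_one_of_le
    intro k
    have := hc ((w0 n) k)
    simp only [Equiv.Perm.mul_apply]
    have hval : ((w0 n) k : ℕ) = n - (k + 1) := by simp [w0]
    have hk := k.isLt
    omega
  have h2 : v = (w0 n)⁻¹ := by
    have h3 := congrArg (fun z => z * (w0 n)⁻¹) h1
    simpa [mul_assoc] using h3
  exact h2.trans w0_inv
lemma eps_schubProd {n : ℕ} (v : Equiv.Perm (Fin n)) :
    eps n v (schubProd n) = if v = w0 n then cc (w0 n) else 0 := by
  rw [eps, schubProd, map_prod]
  simp only [map_sub, rename_X, Sum.elim_inl, Sum.elim_inr, id_eq]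
  split_ifs with h
  · subst h
    rw [cc]
    apply Finset.prod_nbij' (i := fun p : Fin n × Fin n => (p.1, Fin.rev p.2))
      (j := fun p : Fin n × Fin n => (p.1, Fin.rev p.2))
    · rintro ⟨p, q⟩ hp
      simp only [Finset.mem_filter, Finset.mem_univ, true_and] at hp
      rw [mem_invSet]
      have hq := q.isLt
      constructor
      · rw [Fin.lt_def]; simp only [Fin.val_rev]; omega
      · simp only [w0, Fin.revPerm_apply, Fin.rev_rev, Fin.lt_def, Fin.val_rev]
        omega
    · rintro ⟨p, q⟩ hp
      rw [mem_invSet] at hp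
      obtain ⟨h1, h2⟩ := hp
      simp only [Finset.mem_filter, Finset.mem_univ, true_and]
      rw [Fin.lt_def] at h1
      have hq := q.isLt
      dsimp only at *
      simp only [Fin.val_rev]
      omega
    · rintro ⟨p, q⟩ _; simp
    · rintro ⟨p, q⟩ _; simp
    · rintro ⟨p, q⟩ _
      simp [w0, Fin.rev_rev]
  · obtain ⟨i, hi⟩ := exists_small v h
    apply Finset.prod_eq_zero (i := (i, v i))
    · simp only [Finset.mem_filter, Finset.mem_univ, true_and]
      exact hi
    · simp
lemma X_sub_X_ne_zero {n : ℕ} {p q : Fin n} (h : p ≠ q) :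
    (X p - X q : MvPolynomial (Fin n) ℚ) ≠ 0 := by
  intro hc
  rw [sub_eq_zero] at hc
  exact h (MvPolynomial.X_injective hc)

lemma permLen_w0_mul_inv {n : ℕ} (z : Equiv.Perm (Fin n)) :
    permLen (w0 n * z⁻¹) + permLen z = permLen (w0 n) := by
  have h1 : permLen (w0 n * z⁻¹) = permLen (z * w0 n) := by
    rw [← permLen_inv (w0 n * z⁻¹), mul_inv_rev, inv_inv, w0_inv]
  rw [h1]
  exact permLen_mul_w0 z

lemma main_invariant {n : ℕ} (l : List ℕ) : (∀ i ∈ l, i + 1 < n) →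
    permLen ((l.map (adjSwap n)).prod) = l.length →
    ∀ v : Equiv.Perm (Fin n),
      permLen v ≤ permLen (w0 n * ((l.map (adjSwap n)).prod)⁻¹) →
      eps n v (demWordX n l (schubProd n)) =
        if v = w0 n * ((l.map (adjSwap n)).prod)⁻¹ then
          cc (w0 n * ((l.map (adjSwap n)).prod)⁻¹) else 0 := by
  induction l with
  | nil =>
    intro _ _ v _
    simpa [demWordX] using eps_schubProd v
  | cons i s ih =>
    intro hrange hred v hv
    have hi : i + 1 < n := hrange i (by simp)
    set a : Fin n := ⟨i, Nat.lt_of_succ_lt hi⟩ with ha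
    set b : Fin n := ⟨i+1, hi⟩ with hb
    have hab : (a:ℕ) + 1 = (b:ℕ) := rfl
    have habne : a ≠ b := by simp [ha, hb, Fin.ext_iff]
    have hsw : adjSwap n i = Equiv.swap a b := by rw [adjSwap, dif_pos hi]
    set u : Equiv.Perm (Fin n) := (s.map (adjSwap n)).prod with hu
    have hU : ((i :: s).map (adjSwap n)).prod = Equiv.swap a b * u := by
      rw [List.map_cons, List.prod_cons, hsw]
    set w : Equiv.Perm (Fin n) := w0 n * u⁻¹ with hw
    have hsred : permLen u = s.length := reduced_tail i s hred
    have hW' : w0 n * (Equiv.swap a b * u)⁻¹ = w * Equiv.swap a b := by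
      rw [hw, mul_inv_rev, Equiv.swap_inv, mul_assoc]
    have hlenU : permLen (Equiv.swap a b * u) = s.length + 1 := by
      rw [← hU]; simpa using hred
    have hLw := permLen_w0_mul_inv u
    have hLw' := permLen_w0_mul_inv (Equiv.swap a b * u)
    rw [hW'] at hLw'
    rw [← hw] at hLw
    have hlen_drop : permLen (w * Equiv.swap a b) + 1 = permLen w := by omega
    have hd : w b < w a := by
      rcases lt_trichotomy (w a) (w b) with hlt | heq | hgt
      · have := permLen_mul_swap_ascent hab hlt; omega
      · exact absurd (w.injective heq) habne
      · exact hgt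
    rw [hU, hW'] at hv ⊢
    have hv_lt : permLen v < permLen w := by omega
    have hIH := fun (v' : Equiv.Perm (Fin n)) (hv' : permLen v' ≤ permLen w) =>
      ih (fun j hj => hrange j (List.mem_cons_of_mem i hj)) hsred v' hv'
    have hIH1 : eps n v (demWordX n s (schubProd n)) = 0 := by
      rw [hIH v hv_lt.le, if_neg (fun hc => absurd hv_lt (by rw [hc]; exact lt_irrefl _))]
    have hswle : permLen (v * Equiv.swap a b) ≤ permLen v + 1 := by
      rw [← hsw]; exact permLen_mul_adjSwap_le v i
    have hIH2 := hIH (v * Equiv.swap a b) (by omega)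
    have hrec := eps_demAtX n i hi v (demWordX n s (schubProd n))
    have hfold : demWordX n (i :: s) (schubProd n) =
        demAtX n i (demWordX n s (schubProd n)) := rfl
    rw [hfold]
    rcases eq_or_ne (v * Equiv.swap a b) w with hvw | hvw
    · have hveq : v = w * Equiv.swap a b := by
        rw [← hvw, mul_assoc, Equiv.swap_mul_self, mul_one]
      rw [if_pos hveq]
      rw [if_pos hvw] at hIH2
      have hva : v a = w b := by rw [hveq]; simp [Equiv.Perm.mul_apply]
      have hvb : v b = w a := by rw [hveq]; simp [Equiv.Perm.mul_apply]
      rw [hIH1, hIH2, hva, hvb] at hrec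
      have hcc := cc_mul_swap_descent hab hd
      have hXne : (X (w a) - X (w b) : MvPolynomial (Fin n) ℚ) ≠ 0 :=
        X_sub_X_ne_zero (fun hc => absurd (w.injective hc) habne)
      apply mul_left_cancel₀ hXne
      linear_combination -hrec - hcc
    · rw [if_neg hvw] at hIH2
      have hvne : v ≠ w * Equiv.swap a b := by
        intro hc
        apply hvw
        rw [hc, mul_assoc, Equiv.swap_mul_self, mul_one]
      rw [if_neg hvne]
      rw [hIH1, hIH2] at hrec
      have hXne : (X (v a) - X (v b) : MvPolynomial (Fin n) ℚ) ≠ 0 :=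
        X_sub_X_ne_zero (fun hc => absurd (v.injective hc) habne)
      have := mul_eq_zero.1 (by linear_combination hrec :
        (X (v a) - X (v b)) * eps n v (demAtX n i (demWordX n s (schubProd n))) = 0)
      tauto

/-- Substituting `tᵢ := xᵢ` in the double Schubert polynomial gives `𝔖_w(x,x) = 1` if
`w = 1` and `0` otherwise. -/
theorem schubert_diagonal (n : ℕ) (hn : 1 ≤ n) (w : Equiv.Perm (Fin n)) :
    rename (Sum.elim id id : Fin n ⊕ Fin n → Fin n) (schubert n w) =
      if w = 1 then 1 else 0 := by
  have hex := exists_reduced (n := n) (w⁻¹ * w0 n)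
  rw [schubert, demazureOfX, dif_pos hex]
  obtain ⟨hr, hp, hl⟩ := hex.choose_spec
  have hmain := main_invariant hex.choose hr (by rw [hp]; exact hl.symm) 1
    (by simp [permLen_one])
  have hWeq : w0 n * ((hex.choose.map (adjSwap n)).prod)⁻¹ = w := by
    rw [hp]; group
  rw [hWeq] at hmain
  have hfun : (Sum.elim (fun i => (1 : Equiv.Perm (Fin n)) i) id) =
      (Sum.elim id id : Fin n ⊕ Fin n → Fin n) := by
    funext x; cases x <;> simp
  rw [eps, hfun] at hmain
  rw [hmain]
  by_cases hw : w = 1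
  · subst hw
    rw [if_pos rfl, if_pos rfl]
    have h0 : invSet (1 : Equiv.Perm (Fin n)) = ∅ :=
      Finset.card_eq_zero.1 (by rw [← permLen_eq_card]; exact permLen_one)
    rw [cc, h0, Finset.prod_empty]
  · rw [if_neg (fun hc => hw hc.symm), if_neg hw]
end
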